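/- arXiv:2207.01589 — 8 statements merged into one kernel-verified Lean document; each statement's English description precedes it below -/
import Mathlib

section
/- Let q, m be positive integers, let U = {1,...,3q}, and let S_1,...,S_m be subsets of U each of size exactly 3. Construct the repeated matching instance I with T = 3 rounds and n = m + 3q agents and items as follows. The agents are m 'set agents' (indexed j ∈ {1,...,m}) and 3q 'element agents' (indexed m+i for i ∈ U). The items are 3q 'element items' (one item i for each i ∈ U), m−q 'space-filling items', and q 'dummy items'. Valuations: for each set agent j and each element g ∈ S_j, v_j(g,1) = 1; for each set agent j and each space-filling item g, v_j(g,3) = 3; for each element agent m+i, v_{m+i}(i,2) = 3; all other valuations are 0. Then there exist q pairwise disjoint sets among S_1,...,S_m if and only if I admits a repeated matching of social welfare exactly 3m + 9q. -/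
open Finset

/-- The number of rounds in which agent `i` is matched to item `g`
under the repeated matching `A` (a sequence of `T` bijections from agents to items). -/
def mult {α β : Type*} [DecidableEq β] {T : ℕ} (A : Fin T → α ≃ β) (i : α) (g : β) : ℕ :=
  (Finset.univ.filter fun t : Fin T => A t i = g).card

/-- The value of a bundle with multiplicities `B` under the valuation `v`,
where `v g t` is the value of the `t`-th copy of item `g`. -/
def bundleValue {β : Type*} [Fintype β] (v : β → ℕ → ℝ) (B : β → ℕ) : ℝ :=
  ∑ g : β, ∑ t ∈ Finset.range (B g), v g (t + 1)

/-- The social welfare of a repeated matching. -/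
def SW {α β : Type*} [Fintype α] [Fintype β] [DecidableEq β] {T : ℕ}
    (v : α → β → ℕ → ℝ) (A : Fin T → α ≃ β) : ℝ :=
  ∑ i : α, bundleValue (v i) (mult A i)

/-- Remove one copy of `g` from the bundle `B` (if present; otherwise leave `B` intact). -/
def removeOne {β : Type*} [DecidableEq β] (B : β → ℕ) (g : β) : β → ℕ :=
  fun g' => if g' = g then B g' - 1 else B g'

/-- `EF1`: every agent `i` values her bundle at least as much as any other agent `j`'s
bundle after removing one copy of some item. -/
def EF1 {α β : Type*} [Fintype β] [DecidableEq β] {T : ℕ}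
    (v : α → β → ℕ → ℝ) (A : Fin T → α ≃ β) : Prop :=
  ∀ i j : α, ∃ g : β,
    bundleValue (v i) (mult A i) ≥ bundleValue (v i) (removeOne (mult A j) g)

lemma sum_shift_ite (N k : ℕ) (hk : 1 ≤ k) (c : ℝ) :
    ∑ t ∈ Finset.range N, (if t + 1 = k then c else 0) = if k ≤ N then c else 0 := by
  have h1 : ∀ t, (t + 1 = k) = (t = k - 1) := fun t => by
    apply propext; omega
  simp only [h1]
  rw [Finset.sum_ite_eq' (Finset.range N) (k - 1) (fun _ => c)]
  rcases le_or_gt k N with h | h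
  · rw [if_pos (by simp [Finset.mem_range]; omega), if_pos h]
  · rw [if_neg (by simp [Finset.mem_range]; omega), if_neg (by omega)]

lemma mult_row_sum {α β : Type*} [Fintype α] [Fintype β] [DecidableEq β] {T : ℕ}
    (A : Fin T → α ≃ β) (i : α) : ∑ g : β, mult A i g = T := by
  have := Finset.card_eq_sum_card_fiberwise
    (f := fun t : Fin T => A t i) (s := Finset.univ) (t := Finset.univ)
    (fun x _ => Finset.mem_univ _)
  simpa [mult] using this.symm

lemma mult_col_sum {α β : Type*} [Fintype α] [DecidableEq α] [Fintype β] [DecidableEq β] {T : ℕ}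
    (A : Fin T → α ≃ β) (g : β) : ∑ i : α, mult A i g = T := by
  have h : ∀ i : α, mult A i g =
      (Finset.univ.filter fun t : Fin T => (A t).symm g = i).card := by
    intro i
    unfold mult
    congr 1
    apply Finset.filter_congr
    intro t _
    constructor
    · intro h; simp [← h]
    · intro h; simp [← h]
  have := Finset.card_eq_sum_card_fiberwise
    (f := fun t : Fin T => (A t).symm g) (s := Finset.univ) (t := Finset.univ)
    (fun x _ => Finset.mem_univ _)
  simp only [h]
  simpa using this.symm

def itemVal (q m : ℕ) (S : Fin m → Finset (Fin (3 * q))) (a g : Fin (m + 3 * q)) (N : ℕ) : ℝ :=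
  if h : (a : ℕ) < m ∧ (g : ℕ) < 3 * q then
    (if (⟨(g : ℕ), h.2⟩ : Fin (3 * q)) ∈ S ⟨(a : ℕ), h.1⟩ ∧ 1 ≤ N then 1 else 0)
  else if (a : ℕ) < m ∧ 3 * q ≤ (g : ℕ) ∧ (g : ℕ) < m + 2 * q ∧ 3 ≤ N then 3
  else if m ≤ (a : ℕ) ∧ (g : ℕ) + m = (a : ℕ) ∧ 2 ≤ N then 3
  else 0

lemma itemVal_nonneg (q m : ℕ) (S : Fin m → Finset (Fin (3 * q))) (a g : Fin (m + 3 * q)) (N : ℕ) :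
    0 ≤ itemVal q m S a g N := by
  unfold itemVal; split_ifs <;> norm_num

lemma inner_sum_eq (q m : ℕ) (S : Fin m → Finset (Fin (3 * q)))
    (v : Fin (m + 3 * q) → Fin (m + 3 * q) → ℕ → ℝ)
    (hv : ∀ (a g : Fin (m + 3 * q)) (t : ℕ),
      v a g t =
        if h : (a : ℕ) < m ∧ (g : ℕ) < 3 * q then
          (if (⟨(g : ℕ), h.2⟩ : Fin (3 * q)) ∈ S ⟨(a : ℕ), h.1⟩ ∧ t = 1 then 1 else 0)
        else if (a : ℕ) < m ∧ 3 * q ≤ (g : ℕ) ∧ (g : ℕ) < m + 2 * q ∧ t = 3 then 3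
        else if m ≤ (a : ℕ) ∧ (g : ℕ) + m = (a : ℕ) ∧ t = 2 then 3
        else 0)
    (a g : Fin (m + 3 * q)) (N : ℕ) :
    ∑ t ∈ Finset.range N, v a g (t + 1) = itemVal q m S a g N := by
  simp only [hv]
  unfold itemVal
  by_cases h : (a : ℕ) < m ∧ (g : ℕ) < 3 * q
  · simp only [dif_pos h]
    by_cases hmem : (⟨(g : ℕ), h.2⟩ : Fin (3 * q)) ∈ S ⟨(a : ℕ), h.1⟩
    · have he : ∀ t, (if (⟨(g : ℕ), h.2⟩ : Fin (3 * q)) ∈ S ⟨(a : ℕ), h.1⟩ ∧ t + 1 = 1 then (1:ℝ) else 0)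
          = if t + 1 = 1 then 1 else 0 := fun t => by simp [hmem]
      rw [Finset.sum_congr rfl (fun t _ => he t), sum_shift_ite N 1 le_rfl 1]
      simp [hmem]
    · simp [hmem]
  · simp only [dif_neg h]
    by_cases h2 : (a : ℕ) < m ∧ 3 * q ≤ (g : ℕ) ∧ (g : ℕ) < m + 2 * q
    · have he : ∀ t, (if (a : ℕ) < m ∧ 3 * q ≤ (g : ℕ) ∧ (g : ℕ) < m + 2 * q ∧ t + 1 = 3 then (3:ℝ)
          else if m ≤ (a : ℕ) ∧ (g : ℕ) + m = (a : ℕ) ∧ t + 1 = 2 then 3 else 0)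
          = if t + 1 = 3 then 3 else 0 := fun t => by
        by_cases ht : t + 1 = 3
        · rw [if_pos ⟨h2.1, h2.2.1, h2.2.2, ht⟩, if_pos ht]
        · rw [if_neg (fun hc => ht hc.2.2.2), if_neg ht,
            if_neg (fun hc => absurd hc.1 (not_le.2 h2.1))]
      rw [Finset.sum_congr rfl (fun t _ => he t), sum_shift_ite N 3 (by norm_num) 3]
      by_cases h3 : 3 ≤ N
      · rw [if_pos h3, if_pos ⟨h2.1, h2.2.1, h2.2.2, h3⟩]
      · rw [if_neg h3, if_neg (fun hc => h3 hc.2.2.2),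
          if_neg (fun hc => absurd hc.1 (not_le.2 h2.1))]
    · by_cases h4 : m ≤ (a : ℕ) ∧ (g : ℕ) + m = (a : ℕ)
      · have he : ∀ t, (if (a : ℕ) < m ∧ 3 * q ≤ (g : ℕ) ∧ (g : ℕ) < m + 2 * q ∧ t + 1 = 3 then (3:ℝ)
            else if m ≤ (a : ℕ) ∧ (g : ℕ) + m = (a : ℕ) ∧ t + 1 = 2 then 3 else 0)
            = if t + 1 = 2 then 3 else 0 := fun t => by
          rw [if_neg (fun hc => h2 ⟨hc.1, hc.2.1, hc.2.2.1⟩)]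
          by_cases ht : t + 1 = 2
          · rw [if_pos ⟨h4.1, h4.2, ht⟩, if_pos ht]
          · rw [if_neg (fun hc => ht hc.2.2), if_neg ht]
        rw [Finset.sum_congr rfl (fun t _ => he t), sum_shift_ite N 2 (by norm_num) 3]
        rw [if_neg (fun hc : (a : ℕ) < m ∧ 3 * q ≤ (g : ℕ) ∧ (g : ℕ) < m + 2 * q ∧ 3 ≤ N =>
          h2 ⟨hc.1, hc.2.1, hc.2.2.1⟩)]
        by_cases h5 : 2 ≤ N
        · rw [if_pos h5, if_pos ⟨h4.1, h4.2, h5⟩]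
        · rw [if_neg h5, if_neg (fun hc : m ≤ (a : ℕ) ∧ (g : ℕ) + m = (a : ℕ) ∧ 2 ≤ N =>
            h5 hc.2.2)]
      · have he : ∀ t, (if (a : ℕ) < m ∧ 3 * q ≤ (g : ℕ) ∧ (g : ℕ) < m + 2 * q ∧ t + 1 = 3 then (3:ℝ)
            else if m ≤ (a : ℕ) ∧ (g : ℕ) + m = (a : ℕ) ∧ t + 1 = 2 then 3 else 0) = 0 := fun t => by
          rw [if_neg (fun hc => h2 ⟨hc.1, hc.2.1, hc.2.2.1⟩),
            if_neg (fun hc => h4 ⟨hc.1, hc.2.1⟩)]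
        rw [Finset.sum_congr rfl (fun t _ => he t),
          if_neg (fun hc => h2 ⟨hc.1, hc.2.1, hc.2.2.1⟩),
          if_neg (fun hc => h4 ⟨hc.1, hc.2.1⟩)]
        simp

def ci (q m : ℕ) (i : Fin (3 * q)) : Fin (m + 3 * q) := ⟨i.val, by omega⟩

lemma ci_inj (q m : ℕ) : Function.Injective (ci q m) := by
  intro a b h
  simpa [ci, Fin.ext_iff] using h

lemma elem_val (q m : ℕ) (S : Fin m → Finset (Fin (3 * q))) (a g₀ : Fin (m + 3 * q))
    (ha : m ≤ (a : ℕ)) (hg : (g₀ : ℕ) + m = (a : ℕ)) (B : Fin (m + 3 * q) → ℕ) :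
    ∑ g, itemVal q m S a g (B g) = if 2 ≤ B g₀ then 3 else 0 := by
  rw [Finset.sum_eq_single g₀]
  · unfold itemVal
    rw [dif_neg (fun hc => absurd hc.1 (not_lt.2 ha)),
      if_neg (fun hc => absurd hc.1 (not_lt.2 ha))]
    by_cases h5 : 2 ≤ B g₀
    · rw [if_pos ⟨ha, hg, h5⟩, if_pos h5]
    · rw [if_neg (fun hc => h5 hc.2.2), if_neg h5]
  · intro g _ hne
    unfold itemVal
    rw [dif_neg (fun hc => absurd hc.1 (not_lt.2 ha)),
      if_neg (fun hc => absurd hc.1 (not_lt.2 ha)),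
      if_neg (fun hc => hne (Fin.ext (by omega)))]
  · intro h; exact absurd (Finset.mem_univ g₀) h

lemma set_val_nospace (q m : ℕ) (S : Fin m → Finset (Fin (3 * q))) (a : Fin (m + 3 * q))
    (ha : (a : ℕ) < m) (B : Fin (m + 3 * q) → ℕ)
    (hsp : ∀ g : Fin (m + 3 * q), 3 * q ≤ (g : ℕ) → ¬ 3 ≤ B g) :
    ∑ g, itemVal q m S a g (B g)
      = ∑ e ∈ S ⟨(a : ℕ), ha⟩, (if 1 ≤ B (ci q m e) then (1 : ℝ) else 0) := by
  have hmap : ∀ e ∈ S ⟨(a : ℕ), ha⟩,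
      itemVal q m S a (ci q m e) (B (ci q m e)) = if 1 ≤ B (ci q m e) then (1:ℝ) else 0 := by
    intro e he
    unfold itemVal
    have h1 : (a : ℕ) < m ∧ ((ci q m e : Fin (m + 3 * q)) : ℕ) < 3 * q := ⟨ha, e.isLt⟩
    rw [dif_pos h1]
    have : (⟨((ci q m e : Fin (m + 3 * q)) : ℕ), h1.2⟩ : Fin (3 * q)) = e := Fin.ext rfl
    rw [this]
    by_cases h5 : 1 ≤ B (ci q m e)
    · rw [if_pos ⟨he, h5⟩, if_pos h5]
    · rw [if_neg (fun hc => h5 hc.2), if_neg h5]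
  have step1 : ∑ e ∈ S ⟨(a : ℕ), ha⟩, (if 1 ≤ B (ci q m e) then (1 : ℝ) else 0)
      = ∑ g ∈ (S ⟨(a : ℕ), ha⟩).map ⟨ci q m, ci_inj q m⟩, itemVal q m S a g (B g) := by
    rw [Finset.sum_map]
    exact (Finset.sum_congr rfl (fun e he => hmap e he)).symm
  rw [step1]
  apply (Finset.sum_subset (Finset.subset_univ _) _).symm
  · intro g _ hg
    unfold itemVal
    by_cases hlt : (g : ℕ) < 3 * q
    · rw [dif_pos ⟨ha, hlt⟩]
      rw [if_neg]
      rintro ⟨hmem, -⟩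
      exact hg (Finset.mem_map.mpr ⟨⟨(g : ℕ), hlt⟩, hmem, Fin.ext rfl⟩)
    · rw [dif_neg (fun hc => hlt hc.2),
        if_neg (fun hc => hsp g hc.2.1 hc.2.2.2),
        if_neg (fun hc => absurd hc.1 (not_le.2 ha))]

lemma val_le_three (q m : ℕ) (S : Fin m → Finset (Fin (3 * q))) (a : Fin (m + 3 * q))
    (B : Fin (m + 3 * q) → ℕ) (hB : ∑ g, B g = 3) :
    ∑ g, itemVal q m S a g (B g) ≤ 3 := by
  rcases lt_or_ge (a : ℕ) m with ha | ha
  · have h1 : ∀ g : Fin (m + 3 * q), itemVal q m S a g (B g) ≤ (B g : ℝ) := by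
      intro g
      unfold itemVal
      split_ifs with h1 h2 h3 h4
      · exact_mod_cast h2.2
      · exact Nat.cast_nonneg _
      · exact_mod_cast h3.2.2.2
      · exact absurd h4.1 (not_le.2 ha)
      · exact Nat.cast_nonneg _
    calc ∑ g, itemVal q m S a g (B g) ≤ ∑ g, (B g : ℝ) :=
          Finset.sum_le_sum (fun g _ => h1 g)
      _ = ((∑ g, B g : ℕ) : ℝ) := by push_cast; ring
      _ = 3 := by rw [hB]; norm_num
  · have hg₀ : (a : ℕ) - m < m + 3 * q := by omega
    rw [elem_val q m S a ⟨(a : ℕ) - m, hg₀⟩ ha (by simp; omega) B]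
    split_ifs <;> norm_num

lemma ia_lt (q m : ℕ) (hq : 0 < q) (a : Fin (m + 3 * q)) : (a : ℕ) - m < 3 * q := by
  have := a.isLt; omega

def ia (q m : ℕ) (hq : 0 < q) (a : Fin (m + 3 * q)) : Fin (3 * q) :=
  ⟨(a : ℕ) - m, ia_lt q m hq a⟩

def fwdMap (q m : ℕ) (hq : 0 < q) (X : Finset (Fin m))
    (E : Fin m → Fin 3 → Fin (3 * q)) (J : Fin (3 * q) → Fin m) (r : Fin (3 * q) → Fin 3)
    (σ : Fin m → ℕ) (δ : Fin m → ℕ)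
    (hσ : ∀ j ∉ X, σ j < m - q) (hδ : ∀ j ∈ X, δ j < q) (hJX : ∀ i, J i ∈ X)
    (t : Fin 3) (a : Fin (m + 3 * q)) : Fin (m + 3 * q) :=
  if h : (a : ℕ) < m then
    if hx : (⟨(a : ℕ), h⟩ : Fin m) ∈ X then ci q m (E ⟨(a : ℕ), h⟩ t)
    else ⟨3 * q + σ ⟨(a : ℕ), h⟩, by have := hσ _ hx; omega⟩
  else if r (ia q m hq a) = t then
    ⟨m + 2 * q + δ (J (ia q m hq a)), by have := hδ (J (ia q m hq a)) (hJX (ia q m hq a)); omega⟩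
  else ci q m (ia q m hq a)

lemma fwdMap_inj (q m : ℕ) (hq : 0 < q) (hqm : q ≤ m) (X : Finset (Fin m)) (S : Fin m → Finset (Fin (3 * q)))
    (E : Fin m → Fin 3 → Fin (3 * q)) (J : Fin (3 * q) → Fin m) (r : Fin (3 * q) → Fin 3)
    (σ : Fin m → ℕ) (δ : Fin m → ℕ)
    (hσ : ∀ j ∉ X, σ j < m - q) (hδ : ∀ j ∈ X, δ j < q) (hJX : ∀ i, J i ∈ X)
    (hE : ∀ j ∈ X, ∀ t, E j t ∈ S j)
    (hEinj : ∀ j, Function.Injective (E j))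
    (huniq : ∀ (i : Fin (3 * q)) (j : Fin m), j ∈ X → i ∈ S j → j = J i)
    (hr : ∀ i, E (J i) (r i) = i)
    (hσinj : ∀ j ∉ X, ∀ k ∉ X, σ j = σ k → j = k)
    (hδinj : ∀ j ∈ X, ∀ k ∈ X, δ j = δ k → j = k)
    (t : Fin 3) :
    Function.Injective (fwdMap q m hq X E J r σ δ hσ hδ hJX t) := by
  intro a b hab
  unfold fwdMap at hab
  by_cases ha : (a : ℕ) < m <;> by_cases hb : (b : ℕ) < m
  · rw [dif_pos ha, dif_pos hb] at hab
    by_cases hxa : (⟨(a : ℕ), ha⟩ : Fin m) ∈ X <;>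
      by_cases hxb : (⟨(b : ℕ), hb⟩ : Fin m) ∈ X
    · rw [dif_pos hxa, dif_pos hxb] at hab
      have he : E ⟨(a : ℕ), ha⟩ t = E ⟨(b : ℕ), hb⟩ t := ci_inj q m hab
      have h1 := huniq (E ⟨(a : ℕ), ha⟩ t) ⟨(a : ℕ), ha⟩ hxa (hE _ hxa t)
      have h2 := huniq (E ⟨(a : ℕ), ha⟩ t) ⟨(b : ℕ), hb⟩ hxb (he ▸ hE _ hxb t)
      have : (⟨(a : ℕ), ha⟩ : Fin m) = ⟨(b : ℕ), hb⟩ := h1.trans h2.symm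
      exact Fin.ext (Fin.mk.inj this)
    · rw [dif_pos hxa, dif_neg hxb] at hab
      have hv := congrArg Fin.val hab
      have := (E ⟨(a : ℕ), ha⟩ t).isLt
      simp only [ci] at hv
      omega
    · rw [dif_neg hxa, dif_pos hxb] at hab
      have hv := congrArg Fin.val hab
      have := (E ⟨(b : ℕ), hb⟩ t).isLt
      simp only [ci] at hv
      omega
    · rw [dif_neg hxa, dif_neg hxb] at hab
      have hv := congrArg Fin.val hab
      simp only at hv
      have : σ ⟨(a : ℕ), ha⟩ = σ ⟨(b : ℕ), hb⟩ := by omega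
      have := hσinj _ hxa _ hxb this
      exact Fin.ext (Fin.mk.inj this)
  · rw [dif_pos ha, dif_neg hb] at hab
    by_cases hxa : (⟨(a : ℕ), ha⟩ : Fin m) ∈ X
    · rw [dif_pos hxa] at hab
      by_cases hrb : r (ia q m hq b) = t
      · rw [if_pos hrb] at hab
        have hv := congrArg Fin.val hab
        have := (E ⟨(a : ℕ), ha⟩ t).isLt
        simp only [ci] at hv
        omega
      · rw [if_neg hrb] at hab
        have he : E ⟨(a : ℕ), ha⟩ t = (ia q m hq b) :=
          ci_inj q m hab
        have h1 := huniq (E ⟨(a : ℕ), ha⟩ t) ⟨(a : ℕ), ha⟩ hxa (hE _ hxa t)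
        rw [he] at h1
        have h2 := hr (ia q m hq b)
        rw [← h1] at h2
        have h3 : E ⟨(a : ℕ), ha⟩ (r (ia q m hq b))
            = E ⟨(a : ℕ), ha⟩ t := by rw [h2, he]
        exact absurd (hEinj _ h3) hrb
    · rw [dif_neg hxa] at hab
      by_cases hrb : r (ia q m hq b) = t
      · rw [if_pos hrb] at hab
        have hv := congrArg Fin.val hab
        have := hσ _ hxa
        simp only at hv
        omega
      · rw [if_neg hrb] at hab
        have hv := congrArg Fin.val hab
        simp only [ci] at hv
        have : (b : ℕ) - m < 3 * q := by have := b.isLt; omega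
        omega
  · rw [dif_neg ha, dif_pos hb] at hab
    by_cases hxb : (⟨(b : ℕ), hb⟩ : Fin m) ∈ X
    · rw [dif_pos hxb] at hab
      by_cases hra : r (ia q m hq a) = t
      · rw [if_pos hra] at hab
        have hv := congrArg Fin.val hab
        have := (E ⟨(b : ℕ), hb⟩ t).isLt
        simp only [ci] at hv
        omega
      · rw [if_neg hra] at hab
        have he : E ⟨(b : ℕ), hb⟩ t = (ia q m hq a) :=
          ci_inj q m hab.symm
        have h1 := huniq (E ⟨(b : ℕ), hb⟩ t) ⟨(b : ℕ), hb⟩ hxb (hE _ hxb t)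
        rw [he] at h1
        have h2 := hr (ia q m hq a)
        rw [← h1] at h2
        have h3 : E ⟨(b : ℕ), hb⟩ (r (ia q m hq a))
            = E ⟨(b : ℕ), hb⟩ t := by rw [h2, he]
        exact absurd (hEinj _ h3) hra
    · rw [dif_neg hxb] at hab
      by_cases hra : r (ia q m hq a) = t
      · rw [if_pos hra] at hab
        have hv := congrArg Fin.val hab
        have := hσ _ hxb
        simp only at hv
        omega
      · rw [if_neg hra] at hab
        have hv := congrArg Fin.val hab
        simp only [ci] at hv
        have : (a : ℕ) - m < 3 * q := by have := a.isLt; omega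
        omega
  · rw [dif_neg ha, dif_neg hb] at hab
    by_cases hra : r (ia q m hq a) = t <;>
      by_cases hrb : r (ia q m hq b) = t
    · rw [if_pos hra, if_pos hrb] at hab
      have hv := congrArg Fin.val hab
      simp only at hv
      have hδe : δ (J (ia q m hq a))
          = δ (J (ia q m hq b)) := by omega
      have hJe := hδinj _ (hJX _) _ (hJX _) hδe
      have h2 := hr (ia q m hq a)
      have h3 := hr (ia q m hq b)
      rw [hra] at h2
      rw [hrb, ← hJe] at h3
      have hiab : ia q m hq a = ia q m hq b := h2.symm.trans h3
      have := congrArg Fin.val hiab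
      simp only [ia] at this
      exact Fin.ext (by omega)
    · rw [if_pos hra, if_neg hrb] at hab
      have hv := congrArg Fin.val hab
      simp only [ci] at hv
      have hb2 := ia_lt q m hq b
      simp only [ia] at hv
      omega
    · rw [if_neg hra, if_pos hrb] at hab
      have hv := congrArg Fin.val hab
      simp only [ci] at hv
      have ha2 := ia_lt q m hq a
      simp only [ia] at hv
      omega
    · rw [if_neg hra, if_neg hrb] at hab
      have hv := congrArg Fin.val hab
      simp only [ci, ia] at hv
      exact Fin.ext (by omega)

lemma bundle_eq (q m : ℕ) (S : Fin m → Finset (Fin (3 * q)))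
    (v : Fin (m + 3 * q) → Fin (m + 3 * q) → ℕ → ℝ)
    (hv : ∀ (a g : Fin (m + 3 * q)) (t : ℕ),
      v a g t =
        if h : (a : ℕ) < m ∧ (g : ℕ) < 3 * q then
          (if (⟨(g : ℕ), h.2⟩ : Fin (3 * q)) ∈ S ⟨(a : ℕ), h.1⟩ ∧ t = 1 then 1 else 0)
        else if (a : ℕ) < m ∧ 3 * q ≤ (g : ℕ) ∧ (g : ℕ) < m + 2 * q ∧ t = 3 then 3
        else if m ≤ (a : ℕ) ∧ (g : ℕ) + m = (a : ℕ) ∧ t = 2 then 3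
        else 0)
    (a : Fin (m + 3 * q)) (B : Fin (m + 3 * q) → ℕ) :
    bundleValue (v a) B = ∑ g, itemVal q m S a g (B g) := by
  unfold bundleValue
  exact Finset.sum_congr rfl (fun g _ => inner_sum_eq q m S v hv a g (B g))

lemma forward (q m : ℕ) (hq : 0 < q) (hqm : q ≤ m)
    (S : Fin m → Finset (Fin (3 * q))) (hS : ∀ j, (S j).card = 3)
    (v : Fin (m + 3 * q) → Fin (m + 3 * q) → ℕ → ℝ)
    (hv : ∀ (a g : Fin (m + 3 * q)) (t : ℕ),
      v a g t =
        if h : (a : ℕ) < m ∧ (g : ℕ) < 3 * q then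
          (if (⟨(g : ℕ), h.2⟩ : Fin (3 * q)) ∈ S ⟨(a : ℕ), h.1⟩ ∧ t = 1 then 1 else 0)
        else if (a : ℕ) < m ∧ 3 * q ≤ (g : ℕ) ∧ (g : ℕ) < m + 2 * q ∧ t = 3 then 3
        else if m ≤ (a : ℕ) ∧ (g : ℕ) + m = (a : ℕ) ∧ t = 2 then 3
        else 0)
    (X : Finset (Fin m)) (hXcard : X.card = q)
    (hd : ∀ j ∈ X, ∀ k ∈ X, j ≠ k → Disjoint (S j) (S k)) :
    ∃ A : Fin 3 → Fin (m + 3 * q) ≃ Fin (m + 3 * q),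
      SW v A = 3 * (m : ℝ) + 9 * (q : ℝ) := by
  classical
  have hcov : ∀ i : Fin (3 * q), ∃ j, j ∈ X ∧ i ∈ S j := by
    have hU : X.biUnion S = Finset.univ := by
      apply Finset.eq_univ_of_card
      rw [Finset.card_biUnion (fun x hx y hy hxy => hd x hx y hy hxy)]
      rw [Finset.sum_congr rfl (fun j _ => hS j), Finset.sum_const, hXcard]
      simp [mul_comm]
    intro i
    have : i ∈ X.biUnion S := hU ▸ Finset.mem_univ i
    simpa using this
  choose J hJX hJS using hcov
  have huniq : ∀ (i : Fin (3 * q)) (j : Fin m), j ∈ X → i ∈ S j → j = J i := by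
    intro i j hj hij
    by_contra hne
    exact (Finset.disjoint_left.mp (hd j hj (J i) (hJX i) hne) hij) (hJS i)
  let E : Fin m → Fin 3 → Fin (3 * q) := fun j t => ((S j).orderIsoOfFin (hS j) t : Fin (3 * q))
  have hE : ∀ j, ∀ t, E j t ∈ S j := fun j t => ((S j).orderIsoOfFin (hS j) t).2
  have hEinj : ∀ j, Function.Injective (E j) := fun j a b hab =>
    ((S j).orderIsoOfFin (hS j)).injective (Subtype.ext hab)
  have hEsurj : ∀ j, ∀ e ∈ S j, ∃ t, E j t = e := fun j e he =>
    ⟨((S j).orderIsoOfFin (hS j)).symm ⟨e, he⟩,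
      congrArg Subtype.val (((S j).orderIsoOfFin (hS j)).apply_symm_apply ⟨e, he⟩)⟩
  let r : Fin (3 * q) → Fin 3 := fun i => ((S (J i)).orderIsoOfFin (hS (J i))).symm ⟨i, hJS i⟩
  have hr : ∀ i, E (J i) (r i) = i := fun i =>
    congrArg Subtype.val (((S (J i)).orderIsoOfFin (hS (J i))).apply_symm_apply ⟨i, hJS i⟩)
  have hXc : Xᶜ.card = m - q := by rw [Finset.card_compl, hXcard]; simp
  let σ : Fin m → ℕ := fun j =>
    if hj : j ∈ Xᶜ then ((Xᶜ.orderIsoOfFin hXc).symm ⟨j, hj⟩ : Fin (m - q)).val else 0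
  have hσ : ∀ j ∉ X, σ j < m - q := by
    intro j hj
    simp only [σ, dif_pos (Finset.mem_compl.mpr hj)]
    exact ((Xᶜ.orderIsoOfFin hXc).symm ⟨j, Finset.mem_compl.mpr hj⟩).isLt
  have hσinj : ∀ j ∉ X, ∀ k ∉ X, σ j = σ k → j = k := by
    intro j hj k hk h
    simp only [σ, dif_pos (Finset.mem_compl.mpr hj), dif_pos (Finset.mem_compl.mpr hk)] at h
    have := (Xᶜ.orderIsoOfFin hXc).symm.injective
      (Fin.ext h : (Xᶜ.orderIsoOfFin hXc).symm ⟨j, _⟩ = (Xᶜ.orderIsoOfFin hXc).symm ⟨k, _⟩)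
    exact congrArg Subtype.val this
  let δ : Fin m → ℕ := fun j =>
    if hj : j ∈ X then ((X.orderIsoOfFin hXcard).symm ⟨j, hj⟩ : Fin q).val else 0
  have hδ : ∀ j ∈ X, δ j < q := by
    intro j hj
    simp only [δ, dif_pos hj]
    exact ((X.orderIsoOfFin hXcard).symm ⟨j, hj⟩).isLt
  have hδinj : ∀ j ∈ X, ∀ k ∈ X, δ j = δ k → j = k := by
    intro j hj k hk h
    simp only [δ, dif_pos hj, dif_pos hk] at h
    have := (X.orderIsoOfFin hXcard).symm.injective
      (Fin.ext h : (X.orderIsoOfFin hXcard).symm ⟨j, _⟩ = (X.orderIsoOfFin hXcard).symm ⟨k, _⟩)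
    exact congrArg Subtype.val this
  let f := fwdMap q m hq X E J r σ δ hσ hδ hJX
  have hbij : ∀ t, Function.Bijective (f t) := fun t =>
    (Fintype.bijective_iff_injective_and_card _).mpr
      ⟨fwdMap_inj q m hq hqm X S E J r σ δ hσ hδ hJX (fun j _ t => hE j t) hEinj huniq hr hσinj hδinj t, rfl⟩
  refine ⟨fun t => Equiv.ofBijective (f t) (hbij t), ?_⟩
  have hmult : ∀ a g, mult (fun t => Equiv.ofBijective (f t) (hbij t)) a g
      = (Finset.univ.filter fun t : Fin 3 => f t a = g).card := by
    intro a g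
    unfold mult
    simp only [Equiv.ofBijective_apply]
  -- characterizations of f
  have hf1 : ∀ (t : Fin 3) (a : Fin (m + 3 * q)) (h : (a : ℕ) < m)
      (hx : (⟨(a : ℕ), h⟩ : Fin m) ∈ X), f t a = ci q m (E ⟨(a : ℕ), h⟩ t) := by
    intro t a h hx
    show fwdMap q m hq X E J r σ δ hσ hδ hJX t a = _
    unfold fwdMap
    rw [dif_pos h, dif_pos hx]
  have hf2 : ∀ (t : Fin 3) (a : Fin (m + 3 * q)) (h : (a : ℕ) < m)
      (hx : (⟨(a : ℕ), h⟩ : Fin m) ∉ X),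
      (f t a : ℕ) = 3 * q + σ ⟨(a : ℕ), h⟩ := by
    intro t a h hx
    show (fwdMap q m hq X E J r σ δ hσ hδ hJX t a : ℕ) = _
    unfold fwdMap
    rw [dif_pos h, dif_neg hx]
  have hf3 : ∀ (t : Fin 3) (a : Fin (m + 3 * q)) (h : ¬ (a : ℕ) < m)
      (hrt : r (ia q m hq a) = t),
      (f t a : ℕ) = m + 2 * q + δ (J (ia q m hq a)) := by
    intro t a h hrt
    show (fwdMap q m hq X E J r σ δ hσ hδ hJX t a : ℕ) = _
    unfold fwdMap
    rw [dif_neg h, if_pos hrt]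
  have hf4 : ∀ (t : Fin 3) (a : Fin (m + 3 * q)) (h : ¬ (a : ℕ) < m)
      (hrt : r (ia q m hq a) ≠ t), f t a = ci q m (ia q m hq a) := by
    intro t a h hrt
    show fwdMap q m hq X E J r σ δ hσ hδ hJX t a = _
    unfold fwdMap
    rw [dif_neg h, if_neg hrt]
  -- per-agent value = 3
  have hval : ∀ a, ∑ g, itemVal q m S a g
      (mult (fun t => Equiv.ofBijective (f t) (hbij t)) a g) = 3 := by
    intro a
    by_cases ham : (a : ℕ) < m
    · by_cases hx : (⟨(a : ℕ), ham⟩ : Fin m) ∈ X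
      · -- set agent in X
        have hsp : ∀ g : Fin (m + 3 * q), 3 * q ≤ (g : ℕ) →
            ¬ 3 ≤ mult (fun t => Equiv.ofBijective (f t) (hbij t)) a g := by
          intro g hg
          have hz : mult (fun t => Equiv.ofBijective (f t) (hbij t)) a g = 0 := by
            rw [hmult]
            rw [Finset.card_eq_zero, Finset.filter_eq_empty_iff]
            intro t _
            intro heq
            have := congrArg Fin.val heq
            rw [hf1 t a ham hx] at this
            have hlt := (E ⟨(a : ℕ), ham⟩ t).isLt
            simp only [ci] at this
            omega
          omega
        rw [set_val_nospace q m S a ham _ hsp]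
        have hterm : ∀ e ∈ S ⟨(a : ℕ), ham⟩,
            (if 1 ≤ mult (fun t => Equiv.ofBijective (f t) (hbij t)) a (ci q m e)
              then (1 : ℝ) else 0) = 1 := by
          intro e he
          obtain ⟨t, ht⟩ := hEsurj ⟨(a : ℕ), ham⟩ e he
          have h1 : 1 ≤ mult (fun t => Equiv.ofBijective (f t) (hbij t)) a (ci q m e) := by
            rw [hmult]
            refine Finset.card_pos.mpr ⟨t, ?_⟩
            rw [Finset.mem_filter]
            exact ⟨Finset.mem_univ t, by rw [hf1 t a ham hx, ht]⟩
          rw [if_pos h1]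
        rw [Finset.sum_congr rfl hterm, Finset.sum_const, hS ⟨(a : ℕ), ham⟩]
        norm_num
      · -- set agent not in X: gets a space filler thrice
        have hσlt := hσ _ hx
        have hg₀lt : 3 * q + σ ⟨(a : ℕ), ham⟩ < m + 3 * q := by omega
        set g₀ : Fin (m + 3 * q) := ⟨3 * q + σ ⟨(a : ℕ), ham⟩, hg₀lt⟩ with hg₀
        have hB3 : mult (fun t => Equiv.ofBijective (f t) (hbij t)) a g₀ = 3 := by
          rw [hmult]
          have : (Finset.univ.filter fun t : Fin 3 => f t a = g₀) = Finset.univ := by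
            rw [Finset.filter_eq_self]
            intro t _
            apply Fin.ext
            rw [hf2 t a ham hx, hg₀]
          rw [this]
          simp
        have hle := val_le_three q m S a
          (mult (fun t => Equiv.ofBijective (f t) (hbij t)) a)
          (mult_row_sum (fun t => Equiv.ofBijective (f t) (hbij t)) a)
        have hge : (3 : ℝ) ≤ ∑ g, itemVal q m S a g
            (mult (fun t => Equiv.ofBijective (f t) (hbij t)) a g) := by
          have hsingle := Finset.single_le_sum
            (f := fun g => itemVal q m S a g
              (mult (fun t => Equiv.ofBijective (f t) (hbij t)) a g))
            (fun g _ => itemVal_nonneg q m S a g _) (Finset.mem_univ g₀)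
          have : itemVal q m S a g₀
              (mult (fun t => Equiv.ofBijective (f t) (hbij t)) a g₀) = 3 := by
            have hval₀ : (g₀ : ℕ) = 3 * q + σ ⟨(a : ℕ), ham⟩ := by rw [hg₀]
            rw [hB3]
            unfold itemVal
            rw [dif_neg (by omega)]
            rw [if_pos ⟨ham, by omega, by omega, le_rfl⟩]
          linarith
        linarith
    · -- element agent
      have hg : ((ci q m (ia q m hq a) : Fin (m + 3 * q)) : ℕ) + m = (a : ℕ) := by
        simp only [ci, ia]
        omega
      rw [elem_val q m S a (ci q m (ia q m hq a)) (by omega) hg]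
      have h2 : 2 ≤ mult (fun t => Equiv.ofBijective (f t) (hbij t)) a (ci q m (ia q m hq a)) := by
        rw [hmult]
        have hsub : Finset.univ.erase (r (ia q m hq a)) ⊆
            (Finset.univ.filter fun t : Fin 3 => f t a = ci q m (ia q m hq a)) := by
          intro t ht
          rw [Finset.mem_erase] at ht
          rw [Finset.mem_filter]
          exact ⟨Finset.mem_univ t, hf4 t a ham (fun hc => ht.1 hc.symm)⟩
        have hcard := Finset.card_le_card hsub
        rw [Finset.card_erase_of_mem (Finset.mem_univ _)] at hcard
        simp only [Finset.card_univ, Fintype.card_fin] at hcard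
        omega
      rw [if_pos h2]
  -- sum up
  unfold SW
  have : ∀ a : Fin (m + 3 * q), bundleValue (v a)
      (mult (fun t => Equiv.ofBijective (f t) (hbij t)) a) = 3 := by
    intro a
    rw [bundle_eq q m S v hv a _]
    exact hval a
  rw [Finset.sum_congr rfl (fun a _ => this a), Finset.sum_const]
  simp only [Finset.card_univ, Fintype.card_fin]
  push_cast
  ring

def sa (q m : ℕ) (j : Fin m) : Fin (m + 3 * q) := ⟨j.val, by have := j.isLt; omega⟩

def ae (q m : ℕ) (i : Fin (3 * q)) : Fin (m + 3 * q) := ⟨m + i.val, by have := i.isLt; omega⟩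

lemma itemVal_zero (q m : ℕ) (S : Fin m → Finset (Fin (3 * q))) (a g : Fin (m + 3 * q)) :
    itemVal q m S a g 0 = 0 := by
  unfold itemVal
  split_ifs with h1 h2 h3 h4 <;> first | rfl | omega | (exact absurd h2.2 (by norm_num))

lemma backward (q m : ℕ) (hq : 0 < q) (hqm : q ≤ m)
    (S : Fin m → Finset (Fin (3 * q))) (hS : ∀ j, (S j).card = 3)
    (v : Fin (m + 3 * q) → Fin (m + 3 * q) → ℕ → ℝ)
    (hv : ∀ (a g : Fin (m + 3 * q)) (t : ℕ),
      v a g t =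
        if h : (a : ℕ) < m ∧ (g : ℕ) < 3 * q then
          (if (⟨(g : ℕ), h.2⟩ : Fin (3 * q)) ∈ S ⟨(a : ℕ), h.1⟩ ∧ t = 1 then 1 else 0)
        else if (a : ℕ) < m ∧ 3 * q ≤ (g : ℕ) ∧ (g : ℕ) < m + 2 * q ∧ t = 3 then 3
        else if m ≤ (a : ℕ) ∧ (g : ℕ) + m = (a : ℕ) ∧ t = 2 then 3
        else 0)
    (A : Fin 3 → Fin (m + 3 * q) ≃ Fin (m + 3 * q))
    (hA : SW v A = 3 * (m : ℝ) + 9 * (q : ℝ)) :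
    ∃ X : Finset (Fin m), X.card = q ∧
      ∀ j ∈ X, ∀ k ∈ X, j ≠ k → Disjoint (S j) (S k) := by
  classical
  -- every agent has value exactly 3
  have hval3 : ∀ a : Fin (m + 3 * q), ∑ g, itemVal q m S a g (mult A a g) = 3 := by
    have hle : ∀ a ∈ (Finset.univ : Finset (Fin (m + 3 * q))),
        ∑ g, itemVal q m S a g (mult A a g) ≤ 3 :=
      fun a _ => val_le_three q m S a (mult A a) (mult_row_sum A a)
    have hsum : ∑ a : Fin (m + 3 * q), (∑ g, itemVal q m S a g (mult A a g))
        = ∑ _a : Fin (m + 3 * q), (3 : ℝ) := by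
      have h1 : ∑ a : Fin (m + 3 * q), (∑ g, itemVal q m S a g (mult A a g)) = SW v A := by
        unfold SW
        exact (Finset.sum_congr rfl (fun a _ => bundle_eq q m S v hv a (mult A a))).symm
      rw [h1, hA, Finset.sum_const]
      simp only [Finset.card_univ, Fintype.card_fin]
      push_cast
      ring
    intro a
    exact (Finset.sum_eq_sum_iff_of_le hle).mp hsum a (Finset.mem_univ a)
  -- element agents hold their items at least twice
  have helem : ∀ i : Fin (3 * q), 2 ≤ mult A (ae q m i) (ci q m i) := by
    intro i
    have h3 := hval3 (ae q m i)
    rw [elem_val q m S (ae q m i) (ci q m i) (by simp [ae]) (by simp [ci, ae]; omega)] at h3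
    by_contra h
    rw [if_neg h] at h3
    norm_num at h3
  -- the candidate collection
  set X : Finset (Fin m) := Finset.univ.filter
    (fun j : Fin m => ∀ g : Fin (m + 3 * q), 3 * q ≤ (g : ℕ) → ¬ 3 ≤ mult A (sa q m j) g)
    with hXdef
  -- members of X get all three of their elements
  have hXmem : ∀ j ∈ X, ∀ e ∈ S j, 1 ≤ mult A (sa q m j) (ci q m e) := by
    intro j hj e he
    have hsp : ∀ g : Fin (m + 3 * q), 3 * q ≤ (g : ℕ) → ¬ 3 ≤ mult A (sa q m j) g := by
      rw [hXdef, Finset.mem_filter] at hj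
      exact hj.2
    have h3 := hval3 (sa q m j)
    have hlt : ((sa q m j : Fin (m + 3 * q)) : ℕ) < m := j.isLt
    rw [set_val_nospace q m S (sa q m j) hlt _ hsp] at h3
    have hjj : (⟨((sa q m j : Fin (m + 3 * q)) : ℕ), hlt⟩ : Fin m) = j := Fin.ext rfl
    rw [hjj] at h3
    have hone : ∀ e' ∈ S j,
        (if 1 ≤ mult A (sa q m j) (ci q m e') then (1 : ℝ) else 0) ≤ 1 := by
      intro e' _
      split_ifs <;> norm_num
    have hsum : ∑ e' ∈ S j, (if 1 ≤ mult A (sa q m j) (ci q m e') then (1 : ℝ) else 0)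
        = ∑ _e' ∈ S j, (1 : ℝ) := by
      rw [h3, Finset.sum_const, hS j]
      norm_num
    have heach := (Finset.sum_eq_sum_iff_of_le hone).mp hsum e he
    by_contra hc
    rw [if_neg hc] at heach
    norm_num at heach
  -- pairwise disjoint within X
  have hdisj : ∀ j ∈ X, ∀ k ∈ X, j ≠ k → Disjoint (S j) (S k) := by
    intro j hj k hk hne
    rw [Finset.disjoint_left]
    intro e hej hek
    have h1 := hXmem j hj e hej
    have h2 := hXmem k hk e hek
    have h3 := helem e
    have col := mult_col_sum A (ci q m e)
    have hjk : sa q m j ≠ sa q m k := by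
      intro h
      have h2 : ((sa q m j : Fin (m + 3 * q)) : ℕ) = ((sa q m k : Fin (m + 3 * q)) : ℕ) :=
        congrArg Fin.val h
      exact hne (Fin.ext h2)
    have hja : sa q m j ≠ ae q m e := by
      intro h
      have := congrArg Fin.val h
      simp only [sa, ae] at this
      have := j.isLt
      omega
    have hka : sa q m k ≠ ae q m e := by
      intro h
      have := congrArg Fin.val h
      simp only [sa, ae] at this
      have := k.isLt
      omega
    have hsub : mult A (sa q m j) (ci q m e) + (mult A (sa q m k) (ci q m e)
        + mult A (ae q m e) (ci q m e)) ≤ 3 := by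
      calc mult A (sa q m j) (ci q m e) + (mult A (sa q m k) (ci q m e)
            + mult A (ae q m e) (ci q m e))
          = ∑ i ∈ ({sa q m j, sa q m k, ae q m e} : Finset (Fin (m + 3 * q))),
              mult A i (ci q m e) := by
            rw [Finset.sum_insert (by simp [hjk, hja]),
              Finset.sum_insert (by simp [hka]), Finset.sum_singleton]
        _ ≤ ∑ i, mult A i (ci q m e) := Finset.sum_le_sum_of_subset (Finset.subset_univ _)
        _ = 3 := col
    omega
  -- X is large
  have hnot : ∀ j : Fin m, j ∉ X → ∃ g : Fin (m + 3 * q),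
      3 * q ≤ (g : ℕ) ∧ (g : ℕ) < m + 2 * q ∧ 3 ≤ mult A (sa q m j) g := by
    intro j hj
    rw [hXdef, Finset.mem_filter] at hj
    push_neg at hj
    obtain ⟨g, hg1, hg2⟩ := hj (Finset.mem_univ j)
    refine ⟨g, hg1, ?_, hg2⟩
    by_contra hge
    push_neg at hge
    have hrow := mult_row_sum A (sa q m j)
    have hg3 : mult A (sa q m j) g ≤ 3 := by
      calc mult A (sa q m j) g ≤ ∑ g', mult A (sa q m j) g' :=
            Finset.single_le_sum (fun _ _ => Nat.zero_le _) (Finset.mem_univ g)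
        _ = 3 := hrow
    have hothers : ∀ g', g' ≠ g → mult A (sa q m j) g' = 0 := by
      intro g' hgg
      have hin : g' ∈ Finset.univ.erase g := Finset.mem_erase.mpr ⟨hgg, Finset.mem_univ g'⟩
      have herase : ∑ g'' ∈ Finset.univ.erase g, mult A (sa q m j) g''
          + mult A (sa q m j) g = 3 := by
        rw [Finset.sum_erase_add Finset.univ _ (Finset.mem_univ g)]
        exact hrow
      have hz : ∑ g'' ∈ Finset.univ.erase g, mult A (sa q m j) g'' = 0 := by omega
      exact Finset.sum_eq_zero_iff.mp hz g' hin
    have h3 := hval3 (sa q m j)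
    have hzero : ∑ g', itemVal q m S (sa q m j) g' (mult A (sa q m j) g') = 0 := by
      apply Finset.sum_eq_zero
      intro g' _
      by_cases hgg : g' = g
      · subst hgg
        unfold itemVal
        have hjlt : ((sa q m j : Fin (m + 3 * q)) : ℕ) < m := j.isLt
        rw [dif_neg (by omega), if_neg (by omega), if_neg (by omega)]
      · rw [hothers g' hgg]
        exact itemVal_zero q m S _ _
    rw [hzero] at h3
    norm_num at h3
  choose φ hφ1 hφ2 hφ3 using hnot
  have hinj : ∀ j, ∀ (hj : j ∉ X), ∀ k, ∀ (hk : k ∉ X), φ j hj = φ k hk → j = k := by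
    intro j hj k hk he
    by_contra hne
    have col := mult_col_sum A (φ j hj)
    have h1 := hφ3 j hj
    have h2 := hφ3 k hk
    rw [← he] at h2
    have hjk : sa q m j ≠ sa q m k := by
      intro h
      have h2 : ((sa q m j : Fin (m + 3 * q)) : ℕ) = ((sa q m k : Fin (m + 3 * q)) : ℕ) :=
        congrArg Fin.val h
      exact hne (Fin.ext h2)
    have hsub : mult A (sa q m j) (φ j hj) + mult A (sa q m k) (φ j hj) ≤ 3 := by
      calc mult A (sa q m j) (φ j hj) + mult A (sa q m k) (φ j hj)
          = ∑ i ∈ ({sa q m j, sa q m k} : Finset (Fin (m + 3 * q))), mult A i (φ j hj) := by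
            rw [Finset.sum_insert (by simp [hjk]), Finset.sum_singleton]
        _ ≤ ∑ i, mult A i (φ j hj) := Finset.sum_le_sum_of_subset (Finset.subset_univ _)
        _ = 3 := col
    omega
  have hcardc : Xᶜ.card ≤ m - q := by
    have := Finset.card_le_card_of_injOn
      (f := fun j : Fin m => if hj : j ∈ X then 0 else ((φ j hj : Fin (m + 3 * q)) : ℕ))
      (t := Finset.Ico (3 * q) (m + 2 * q)) ?_ ?_ (s := Xᶜ)
    · rw [Nat.card_Ico] at this
      omega
    · intro j hj
      rw [Finset.mem_coe, Finset.mem_compl] at hj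
      show (if hj : j ∈ X then 0 else ((φ j hj : Fin (m + 3 * q)) : ℕ))
        ∈ Finset.Ico (3 * q) (m + 2 * q)
      rw [dif_neg hj]
      exact Finset.mem_Ico.mpr ⟨hφ1 j hj, hφ2 j hj⟩
    · intro j hj k hk he
      rw [Finset.mem_coe, Finset.mem_compl] at hj hk
      dsimp only at he
      rw [dif_neg hj, dif_neg hk] at he
      exact hinj j hj k hk (Fin.ext he)
  have hcard : q ≤ X.card := by
    have := Finset.card_add_card_compl X
    rw [Fintype.card_fin] at this
    omega
  obtain ⟨Y, hYX, hYcard⟩ := Finset.exists_subset_card_eq hcard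
  exact ⟨Y, hYcard, fun j hj k hk hne => hdisj j (hYX hj) k (hYX hk) hne⟩

/-- X3C reduction: there are `q` pairwise disjoint sets among `S 0, ..., S (m-1)`
iff the constructed repeated matching instance (with `T = 3` rounds and `m + 3q`
agents/items) admits a repeated matching of social welfare exactly `3m + 9q`.
Agents `a` with `a < m` are set agents, agents `a` with `m ≤ a` are element
agents (agent `m + i` for element `i`).  Items `g` with `g < 3q` are element
items, items with `3q ≤ g < m + 2q` are space-filling items, and items with
`m + 2q ≤ g` are dummy items. -/
theorem stmt0 (q m : ℕ) (hq : 0 < q) (hm : 0 < m) (hqm : q ≤ m)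
    (S : Fin m → Finset (Fin (3 * q))) (hS : ∀ j, (S j).card = 3)
    (v : Fin (m + 3 * q) → Fin (m + 3 * q) → ℕ → ℝ)
    (hv : ∀ (a g : Fin (m + 3 * q)) (t : ℕ),
      v a g t =
        if h : (a : ℕ) < m ∧ (g : ℕ) < 3 * q then
          (if (⟨(g : ℕ), h.2⟩ : Fin (3 * q)) ∈ S ⟨(a : ℕ), h.1⟩ ∧ t = 1 then 1 else 0)
        else if (a : ℕ) < m ∧ 3 * q ≤ (g : ℕ) ∧ (g : ℕ) < m + 2 * q ∧ t = 3 then 3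
        else if m ≤ (a : ℕ) ∧ (g : ℕ) + m = (a : ℕ) ∧ t = 2 then 3
        else 0) :
    (∃ X : Finset (Fin m), X.card = q ∧
        ∀ j ∈ X, ∀ k ∈ X, j ≠ k → Disjoint (S j) (S k)) ↔
      (∃ A : Fin 3 → Fin (m + 3 * q) ≃ Fin (m + 3 * q),
        SW v A = 3 * (m : ℝ) + 9 * (q : ℝ)) := by
  constructor
  · rintro ⟨X, hX1, hX2⟩
    exact forward q m hq hqm S hS v hv X hX1 hX2
  · rintro ⟨A, hA⟩
    exact backward q m hq hqm S hS v hv A hA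
end

section
/- Let I be a repeated matching instance with n agents/items and T rounds in which every valuation is monotone non-decreasing, i.e., v_i(g,t) ≤ v_i(g,t+1) for all agents i, items g, and t ∈ {1,...,T−1}. Then there exists a single bijection σ from agents to items such that the repeated matching that uses σ in every one of the T rounds has maximum social welfare among all repeated matchings of I. -/
open Finset

lemma mono_chain {T : ℕ} (f : ℕ → ℝ) (hf : ∀ t, 1 ≤ t → t < T → f t ≤ f (t+1)) :
    ∀ a b : ℕ, 1 ≤ a → a ≤ b → b ≤ T → f a ≤ f b := by
  intro a b ha hab hbT
  induction b with
  | zero => omega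
  | succ b ih =>
    rcases Nat.lt_or_ge a (b+1) with h | h
    · have hab' : a ≤ b := by omega
      have := ih hab' (by omega)
      exact le_trans this (hf b (by omega) (by omega))
    · have : a = b + 1 := by omega
      simp [this]

lemma avg_ineq {T N : ℕ} (hN : N ≤ T) (f : ℕ → ℝ)
    (hf : ∀ t, 1 ≤ t → t < T → f t ≤ f (t+1)) :
    (T : ℝ) * ∑ k ∈ range N, f (k+1) ≤ (N : ℝ) * ∑ t ∈ range T, f (t+1) := by
  rcases Nat.eq_zero_or_pos N with h0 | hpos
  · simp [h0]
  have hmono := mono_chain f hf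
  have hsplit : ∑ t ∈ range T, f (t+1) =
      (∑ k ∈ range N, f (k+1)) + ∑ t ∈ Ico N T, f (t+1) := by
    rw [range_eq_Ico, ← Finset.sum_Ico_consecutive _ (Nat.zero_le N) hN, ← range_eq_Ico]
  have hhead : ∑ k ∈ range N, f (k+1) ≤ (N : ℝ) * f N := by
    have := Finset.sum_le_card_nsmul (range N) (fun k => f (k+1)) (f N) ?_
    · simpa [nsmul_eq_mul] using this
    · intro k hk
      simp only [mem_range] at hk
      exact hmono (k+1) N (by omega) (by omega) hN
  have htail : ((T - N : ℕ) : ℝ) * f N ≤ ∑ t ∈ Ico N T, f (t+1) := by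
    have := Finset.card_nsmul_le_sum (Ico N T) (fun t => f (t+1)) (f N) ?_
    · simpa [nsmul_eq_mul, Nat.card_Ico] using this
    · intro t ht
      simp only [mem_Ico] at ht
      exact hmono N (t+1) hpos (by omega) (by omega)
  have hTN : ((T - N : ℕ) : ℝ) = (T : ℝ) - N := by
    push_cast [Nat.cast_sub hN]; ring
  rw [hsplit]
  have hNpos : (0:ℝ) < N := by exact_mod_cast hpos
  have hTNnn : (0:ℝ) ≤ (T:ℝ) - N := by
    have : (N:ℝ) ≤ T := by exact_mod_cast hN
    linarith
  rw [hTN] at htail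
  nlinarith [mul_le_mul_of_nonneg_left hhead hTNnn,
    mul_le_mul_of_nonneg_left htail (le_of_lt hNpos)]

lemma const_SW {n T : ℕ} (v : Fin n → Fin n → ℕ → ℝ) (σ : Fin n ≃ Fin n) :
    SW v (fun _ : Fin T => σ) = ∑ i, ∑ t ∈ range T, v i (σ i) (t+1) := by
  unfold SW bundleValue
  refine Finset.sum_congr rfl fun i _ => ?_
  have hm : ∀ g, mult (fun _ : Fin T => σ) i g = if σ i = g then T else 0 := by
    intro g
    unfold mult
    rw [Finset.filter_const, apply_ite Finset.card]
    simp
  rw [Finset.sum_eq_single (σ i)]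
  · rw [hm (σ i)]; simp
  · intro g _ hg
    rw [hm g, if_neg (by exact fun h => hg h.symm)]
    simp
  · simp

lemma double_count {n T : ℕ} (W : Fin n → ℝ) (A : Fin T → Fin n ≃ Fin n) (i : Fin n) :
    ∑ g, ((mult A i g : ℝ) * W g)
      = ∑ t : Fin T, W (A t i) := by
  unfold mult
  have h1 : ∀ g : Fin n,
      ((Finset.univ.filter fun t : Fin T => A t i = g).card : ℝ) * W g
        = ∑ t ∈ Finset.univ.filter fun t : Fin T => A t i = g, W (A t i) := by
    intro g
    rw [Finset.sum_congr rfl fun t ht => by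
      rw [(Finset.mem_filter.mp ht).2]]
    rw [Finset.sum_const, nsmul_eq_mul]
  rw [Finset.sum_congr rfl fun g _ => h1 g]
  exact Finset.sum_fiberwise _ _ _

/-- With monotone non-decreasing valuations, some fixed bijection repeated in all
`T` rounds achieves maximum social welfare. -/
theorem stmt1 (n T : ℕ) (v : Fin n → Fin n → ℕ → ℝ)
    (hmono : ∀ (i g : Fin n) (t : ℕ), 1 ≤ t → t < T → v i g t ≤ v i g (t + 1)) :
    ∃ σ : Fin n ≃ Fin n, ∀ A : Fin T → Fin n ≃ Fin n,
      SW v A ≤ SW v (fun _ : Fin T => σ) := by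
  classical
  set W : Fin n → Fin n → ℝ := fun i g => ∑ t ∈ range T, v i g (t+1) with hW
  obtain ⟨σ, -, hσ⟩ := Finset.exists_max_image (Finset.univ : Finset (Fin n ≃ Fin n))
    (fun σ => ∑ i, W i (σ i)) ⟨Equiv.refl _, Finset.mem_univ _⟩
  refine ⟨σ, fun A => ?_⟩
  rcases Nat.eq_zero_or_pos T with hT | hT
  · subst hT
    simp [SW, bundleValue, mult]
  · have hTpos : (0:ℝ) < T := by exact_mod_cast hT
    rw [← mul_le_mul_iff_right₀ hTpos]
    have step1 : (T:ℝ) * SW v A ≤ ∑ i, ∑ g, ((mult A i g : ℝ) * W i g) := by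
      unfold SW bundleValue
      rw [Finset.mul_sum]
      refine Finset.sum_le_sum fun i _ => ?_
      rw [Finset.mul_sum]
      refine Finset.sum_le_sum fun g _ => ?_
      have hle : mult A i g ≤ T := by
        have := Finset.card_filter_le (Finset.univ : Finset (Fin T))
          (fun t => A t i = g)
        unfold mult; convert this.trans (Finset.card_univ.trans (Fintype.card_fin T)).le
      exact avg_ineq hle (fun t => v i g t) (hmono i g)
    have step2 : ∑ i, ∑ g, ((mult A i g : ℝ) * W i g)
        = ∑ t : Fin T, ∑ i, W i (A t i) := by
      rw [Finset.sum_congr rfl fun i (_ : i ∈ Finset.univ) => double_count (W i) A i]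
      exact Finset.sum_comm
    have step3 : ∑ t : Fin T, ∑ i, W i (A t i) ≤ (T:ℝ) * ∑ i, W i (σ i) := by
      calc ∑ t : Fin T, ∑ i, W i (A t i)
          ≤ ∑ _t : Fin T, ∑ i, W i (σ i) :=
            Finset.sum_le_sum fun t _ => hσ (A t) (Finset.mem_univ _)
        _ = (T:ℝ) * ∑ i, W i (σ i) := by
            rw [Finset.sum_const, nsmul_eq_mul]; simp
    calc (T:ℝ) * SW v A ≤ ∑ i, ∑ g, ((mult A i g : ℝ) * W i g) := step1
      _ = ∑ t : Fin T, ∑ i, W i (A t i) := step2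
      _ ≤ (T:ℝ) * ∑ i, W i (σ i) := step3
      _ = (T:ℝ) * SW v (fun _ : Fin T => σ) := by rw [const_SW]
end

section
/- Let I be a repeated matching instance with constant valuations, i.e., for every agent i and item g, v_i(g,1) = v_i(g,2) = ... = v_i(g,T) = v_i(g). Then for every repeated matching A = (A^1,...,A^T) of I there exists a round t ∈ {1,...,T} such that the repeated matching that uses the bijection A^t in all T rounds has social welfare at least SW(A). -/
open Finset

/-- With constant valuations, for every repeated matching `A` there is a round `t`
such that repeating the single-round matching `A t` in all rounds has at least as
high social welfare as `A`. -/
theorem stmt2 (n T : ℕ) (hT : 0 < T) (v : Fin n → Fin n → ℕ → ℝ)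
    (hconst : ∀ (i g : Fin n) (t t' : ℕ),
      1 ≤ t → t ≤ T → 1 ≤ t' → t' ≤ T → v i g t = v i g t')
    (A : Fin T → Fin n ≃ Fin n) :
    ∃ t : Fin T, SW v A ≤ SW v (fun _ : Fin T => A t) := by
  classical
  -- weight of a round
  set w : Fin T → ℝ := fun t => ∑ i : Fin n, v i (A t i) 1 with hw
  have hmultle : ∀ (i g : Fin n), mult A i g ≤ T := by
    intro i g
    calc (Finset.univ.filter fun t : Fin T => A t i = g).card
        ≤ (Finset.univ : Finset (Fin T)).card := Finset.card_filter_le _ _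
      _ = T := by simp
  -- bundleValue of A i as a sum over rounds
  have hbv : ∀ i : Fin n, bundleValue (v i) (mult A i) = ∑ t : Fin T, v i (A t i) 1 := by
    intro i
    have h1 : bundleValue (v i) (mult A i) = ∑ g : Fin n, (mult A i g : ℝ) * v i g 1 := by
      unfold bundleValue
      refine Finset.sum_congr rfl fun g _ => ?_
      have : ∀ s ∈ Finset.range (mult A i g), v i g (s + 1) = v i g 1 := by
        intro s hs
        exact hconst i g (s+1) 1 (by omega)
          (by have := Finset.mem_range.mp hs; have := hmultle i g; omega) le_rfl hT
      rw [Finset.sum_congr rfl this, Finset.sum_const, nsmul_eq_mul, Finset.card_range]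
    rw [h1]
    have h2 : ∀ g : Fin n, (mult A i g : ℝ) * v i g 1
        = ∑ t ∈ Finset.univ.filter (fun t : Fin T => A t i = g), v i (A t i) 1 := by
      intro g
      rw [Finset.sum_congr rfl (fun t ht => by
        rw [(Finset.mem_filter.mp ht).2]), Finset.sum_const, nsmul_eq_mul]
      rfl
    rw [Finset.sum_congr rfl (fun g _ => h2 g)]
    exact Finset.sum_fiberwise _ _ _
  have hSWA : SW v A = ∑ t : Fin T, w t := by
    unfold SW
    rw [Finset.sum_congr rfl (fun i _ => hbv i)]
    exact Finset.sum_comm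
  -- bundleValue of constant matching
  have hconstSW : ∀ t : Fin T, SW v (fun _ : Fin T => A t) = (T : ℝ) * w t := by
    intro t
    unfold SW
    rw [hw, Finset.mul_sum]
    refine Finset.sum_congr rfl fun i _ => ?_
    unfold bundleValue
    have hm : ∀ g : Fin n, mult (fun _ : Fin T => A t) i g = if A t i = g then T else 0 := by
      intro g
      unfold mult
      by_cases h : A t i = g <;> simp [h]
    have hsplit : ∀ g : Fin n, ∑ s ∈ Finset.range (mult (fun _ : Fin T => A t) i g), v i g (s+1)
        = if A t i = g then ∑ s ∈ Finset.range T, v i g (s+1) else 0 := by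
      intro g; rw [hm g]; split <;> simp
    rw [Finset.sum_congr rfl (fun g _ => hsplit g)]
    rw [Finset.sum_ite_eq (Finset.univ : Finset (Fin n)) (A t i)
      (fun g => ∑ s ∈ Finset.range T, v i g (s+1))]
    simp only [Finset.mem_univ, if_true]
    have : ∀ s ∈ Finset.range T, v i (A t i) (s + 1) = v i (A t i) 1 := by
      intro s hs
      exact hconst i (A t i) (s+1) 1 (by omega) (by have := Finset.mem_range.mp hs; omega) le_rfl hT
    rw [Finset.sum_congr rfl this, Finset.sum_const, nsmul_eq_mul, Finset.card_range]
  -- pick maximizing round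
  have hne : (Finset.univ : Finset (Fin T)).Nonempty := by
    simpa [Finset.univ_nonempty_iff] using Fin.pos_iff_nonempty.mp hT
  obtain ⟨t, -, ht⟩ := Finset.exists_max_image Finset.univ w hne
  refine ⟨t, ?_⟩
  rw [hSWA, hconstSW t]
  calc ∑ s : Fin T, w s ≤ ∑ _s : Fin T, w t :=
        Finset.sum_le_sum fun s _ => ht s (Finset.mem_univ s)
    _ = (T : ℝ) * w t := by rw [Finset.sum_const]; simp [nsmul_eq_mul]
end

section
/- Let I be a repeated matching instance with n agents/items and T rounds in which all agents have the same valuation function v (identical valuations) and v(g,t) ≥ 0 for all items g and t ∈ {1,...,T}. Then there exists a repeated matching of I that is EF1. -/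
open Finset

section Aux

lemma count_mod_card (n q a : ℕ) (hn : 0 < n) (ha : a < n) :
    ((Finset.range (n*q)).filter fun s => s % n = a).card = q := by
  have key : (Finset.range q).card = ((Finset.range (n*q)).filter fun s => s % n = a).card := by
    apply Finset.card_nbij' (fun k => n * k + a) (fun s => s / n)
    · intro k hk
      simp only [Finset.mem_coe, Finset.mem_range] at hk
      simp only [Finset.mem_coe, Finset.mem_filter, Finset.mem_range]
      constructor
      · calc n * k + a < n * k + n := by omega
          _ = n * (k+1) := by ring
          _ ≤ n * q := Nat.mul_le_mul_left n hk
      · rw [Nat.mul_add_mod, Nat.mod_eq_of_lt ha]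
    · intro s hs
      simp only [Finset.mem_coe, Finset.mem_filter, Finset.mem_range] at hs ⊢
      rw [Nat.div_lt_iff_lt_mul hn, mul_comm]
      exact hs.1
    · intro k hk
      dsimp only
      rw [Nat.mul_add_div hn, Nat.div_eq_of_lt ha, add_zero]
    · intro s hs
      simp only [Finset.mem_coe, Finset.mem_filter, Finset.mem_range] at hs
      dsimp only
      conv_rhs => rw [← Nat.div_add_mod s n]
      rw [hs.2]
  rw [← key, Finset.card_range]

lemma pos_strict {n r i : ℕ} (hrn : r ≤ n) (hr : 0 < r) {l l' : ℕ} (h : l < l') :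
    (l*n+i)/r < (l'*n+i)/r := by
  have h1 : (l*n+i)/r + 1 ≤ ((l+1)*n + i)/r := by
    rw [Nat.le_div_iff_mul_le hr, add_mul, one_mul]
    have h2 := Nat.div_mul_le_self (l*n+i) r
    have : (l+1)*n + i = l*n + i + n := by ring
    omega
  calc (l*n+i)/r < (l*n+i)/r + 1 := Nat.lt_succ_self _
    _ ≤ ((l+1)*n + i)/r := h1
    _ ≤ (l'*n+i)/r := Nat.div_le_div_right (by nlinarith)

lemma pos_dom {n r : ℕ} {i j : ℕ} (hi : i < n) (k : ℕ) :
    (k*n+i)/r ≤ ((k+1)*n+j)/r := by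
  apply Nat.div_le_div_right
  have : (k+1)*n + j = k*n + n + j := by ring
  omega

lemma bundleValue_removeOne_le {β : Type*} [Fintype β] [DecidableEq β] (v : β → ℕ → ℝ)
    (B : β → ℕ) (g : β) (N : ℕ) (hB : ∀ g', B g' ≤ N)
    (hv : ∀ g' t, 1 ≤ t → t ≤ N → 0 ≤ v g' t) :
    bundleValue v (removeOne B g) ≤ bundleValue v B := by
  unfold bundleValue removeOne
  apply Finset.sum_le_sum
  intro g' _
  apply Finset.sum_le_sum_of_subset_of_nonneg
  · apply Finset.range_subset_range.mpr; split <;> omega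
  · intro t ht _
    exact hv g' (t+1) (by omega) (by have := hB g'; simp only [Finset.mem_range] at ht; omega)

lemma bundleValue_removeOne_eq {β : Type*} [Fintype β] [DecidableEq β] (v : β → ℕ → ℝ)
    (B : β → ℕ) (g : β) (m : ℕ) (h : B g = m + 1) :
    bundleValue v (removeOne B g) = bundleValue v B - v g (m+1) := by
  unfold bundleValue
  rw [← Finset.sum_erase_add _ _ (Finset.mem_univ g),
      ← Finset.sum_erase_add _ _ (Finset.mem_univ g)]
  have h1 : ∀ g' ∈ Finset.univ.erase g,
      (∑ t ∈ Finset.range (removeOne B g g'), v g' (t+1))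
        = ∑ t ∈ Finset.range (B g'), v g' (t+1) := by
    intro g' hg'
    rw [Finset.mem_erase] at hg'
    simp [removeOne, hg'.1]
  rw [Finset.sum_congr rfl h1]
  have h2 : removeOne B g g = m := by simp [removeOne, h]
  rw [h2, h, Finset.sum_range_succ]
  ring

lemma filter_mem_eq {n : ℕ} (s : Finset (Fin n)) :
    Finset.univ.filter (· ∈ s) = s := by
  ext g; simp

lemma decompose {n : ℕ} : ∀ (r : ℕ) (E : Fin n → Finset (Fin n)),
    (∀ i, (E i).card = r) → (∀ g, (Finset.univ.filter fun i => g ∈ E i).card = r) →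
    ∃ σ : Fin r → (Fin n ≃ Fin n), ∀ i, E i = Finset.univ.image fun k => σ k i := by
  intro r
  induction r with
  | zero =>
    intro E hc _
    refine ⟨Fin.elim0, fun i => ?_⟩
    rw [Finset.card_eq_zero.mp (hc i)]
    symm
    rw [Finset.image_eq_empty]
    exact Finset.univ_eq_empty
  | succ r ih =>
    intro E hc hreg
    have hall : ∀ s : Finset (Fin n), s.card ≤ (s.biUnion E).card := by
      intro s
      have h1 : (r+1) * s.card = ∑ i ∈ s, (E i).card := by
        rw [Finset.sum_congr rfl (fun i _ => hc i), Finset.sum_const, smul_eq_mul, mul_comm]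
      have h2 : ∑ i ∈ s, (E i).card = ∑ g : Fin n, ((s.filter fun i => g ∈ E i)).card := by
        have : ∀ i ∈ s, (E i).card = ∑ g : Fin n, if g ∈ E i then 1 else 0 := by
          intro i _
          rw [← Finset.card_filter, filter_mem_eq]
        rw [Finset.sum_congr rfl this, Finset.sum_comm]
        apply Finset.sum_congr rfl
        intro g _
        rw [Finset.card_filter]
      have h3 : ∀ g : Fin n, ((s.filter fun i => g ∈ E i)).card
          ≤ if g ∈ s.biUnion E then (r+1) else 0 := by
        intro g
        split
        · calc ((s.filter fun i => g ∈ E i)).card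
              ≤ ((Finset.univ.filter fun i => g ∈ E i)).card :=
                Finset.card_le_card (Finset.filter_subset_filter _ (Finset.subset_univ s))
            _ = r + 1 := hreg g
        · next hg =>
          apply Nat.le_of_eq
          rw [Finset.card_eq_zero, Finset.filter_eq_empty_iff]
          intro i hi hmem
          exact hg (Finset.mem_biUnion.mpr ⟨i, hi, hmem⟩)
      have h4 : ∑ g : Fin n, (if g ∈ s.biUnion E then (r+1) else 0)
          = (s.biUnion E).card * (r+1) := by
        rw [Finset.sum_ite_mem, Finset.univ_inter, Finset.sum_const, smul_eq_mul]
      have h5 : (r+1) * s.card ≤ (r+1) * (s.biUnion E).card := by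
        rw [h1, h2]
        calc ∑ g : Fin n, ((s.filter fun i => g ∈ E i)).card
            ≤ ∑ g : Fin n, (if g ∈ s.biUnion E then (r+1) else 0) :=
              Finset.sum_le_sum fun g _ => h3 g
          _ = (s.biUnion E).card * (r+1) := h4
          _ = (r+1) * (s.biUnion E).card := mul_comm _ _
      exact Nat.le_of_mul_le_mul_left h5 (Nat.succ_pos r)
    obtain ⟨f, hfinj, hfmem⟩ := (Finset.all_card_le_biUnion_card_iff_exists_injective E).mp hall
    have hfbij : Function.Bijective f := Finite.injective_iff_bijective.mp hfinj
    let e := Equiv.ofBijective f hfbij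
    have he : ∀ i, e i = f i := fun i => rfl
    set E' : Fin n → Finset (Fin n) := fun i => (E i).erase (f i) with hE'
    have hc' : ∀ i, (E' i).card = r := by
      intro i
      rw [hE']
      simp only
      rw [Finset.card_erase_of_mem (hfmem i), hc i]
      omega
    have hreg' : ∀ g, (Finset.univ.filter fun i => g ∈ E' i).card = r := by
      intro g
      have hkey : (Finset.univ.filter fun i => g ∈ E' i)
          = (Finset.univ.filter fun i => g ∈ E i).erase (e.symm g) := by
        ext i
        simp only [Finset.mem_filter, Finset.mem_erase, Finset.mem_univ, true_and, hE']
        constructor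
        · rintro ⟨hne, hmem⟩
          refine ⟨fun hh => hne ?_, hmem⟩
          rw [hh, ← he, Equiv.apply_symm_apply]
        · rintro ⟨hne, hmem⟩
          refine ⟨fun hh => hne ?_, hmem⟩
          rw [Equiv.eq_symm_apply, he]
          exact hh.symm
      have hmem2 : e.symm g ∈ Finset.univ.filter fun i => g ∈ E i := by
        rw [Finset.mem_filter]
        refine ⟨Finset.mem_univ _, ?_⟩
        have hfe : f (e.symm g) = g := by rw [← he, Equiv.apply_symm_apply]
        have h2 := hfmem (e.symm g)
        rwa [hfe] at h2
      rw [hkey, Finset.card_erase_of_mem hmem2, hreg g]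
      omega
    obtain ⟨σ', hσ'⟩ := ih E' hc' hreg'
    set σ : Fin (r+1) → (Fin n ≃ Fin n) := Fin.cons e σ' with hσdef
    have hσ0 : σ 0 = e := rfl
    have hσs : ∀ k : Fin r, σ k.succ = σ' k := fun k => by
      rw [hσdef]
      exact Fin.cons_succ (α := fun _ : Fin (r+1) => Fin n ≃ Fin n) e σ' k
    refine ⟨σ, fun i => ?_⟩
    have himg : (Finset.univ.image fun k : Fin (r+1) => σ k i)
        = insert (e i) (Finset.univ.image fun k : Fin r => σ' k i) := by
      ext g
      simp only [Finset.mem_image, Finset.mem_insert, Finset.mem_univ, true_and]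
      constructor
      · rintro ⟨k, rfl⟩
        induction k using Fin.cases with
        | zero => left; rw [hσ0]
        | succ k' => right; exact ⟨k', by rw [hσs]⟩
      · rintro (rfl | ⟨k', rfl⟩)
        · exact ⟨0, by rw [hσ0]⟩
        · exact ⟨k'.succ, by rw [hσs]⟩
    rw [himg, ← hσ' i, hE', he]
    exact (Finset.insert_erase (hfmem i)).symm

open Fin.NatCast in
lemma mult_formula {n T q r : ℕ} (hn : 0 < n) (hT : n * q + r = T)
    (σ : Fin r → (Fin n ≃ Fin n)) :
    ∃ A : Fin T → (Fin n ≃ Fin n), ∀ i g : Fin n,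
      mult A i g = (Finset.univ.filter fun k : Fin r => σ k i = g).card + q := by
  haveI : NeZero n := ⟨hn.ne'⟩
  set A : Fin T → (Fin n ≃ Fin n) := fun t =>
    if h : (t : ℕ) < r then σ ⟨t, h⟩ else Equiv.addRight ((((t:ℕ) - r) : ℕ) : Fin n) with hA
  refine ⟨A, fun i g => ?_⟩
  set a : ℕ := ((g - i : Fin n) : ℕ) with ha
  have han : a < n := (g - i).isLt
  have hsplit := Finset.card_filter_add_card_filter_not
    (s := Finset.univ.filter fun t : Fin T => A t i = g) (p := fun t => (t:ℕ) < r)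
  rw [Finset.filter_filter, Finset.filter_filter] at hsplit
  have hc1 : (Finset.univ.filter fun t : Fin T => A t i = g ∧ (t:ℕ) < r).card
      = (Finset.univ.filter fun k : Fin r => σ k i = g).card := by
    refine Finset.card_bij
      (fun t ht => (⟨(t:ℕ), ((Finset.mem_filter.mp ht).2).2⟩ : Fin r)) ?_ ?_ ?_
    · intro t ht
      obtain ⟨-, h1, h2⟩ := Finset.mem_filter.mp ht
      rw [Finset.mem_filter]
      refine ⟨Finset.mem_univ _, ?_⟩
      rw [hA] at h1
      simp only [dif_pos h2] at h1
      exact h1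
    · intro t1 h1 t2 h2 heq
      have heq' : ((⟨(t1:ℕ), ((Finset.mem_filter.mp h1).2).2⟩ : Fin r))
          = ⟨(t2:ℕ), ((Finset.mem_filter.mp h2).2).2⟩ := heq
      rw [Fin.mk.injEq] at heq'
      exact Fin.ext heq'
    · intro k hk
      have hkT : (k : ℕ) < T := lt_of_lt_of_le k.isLt (by omega)
      refine ⟨⟨k, hkT⟩, ?_, rfl⟩
      rw [Finset.mem_filter]
      refine ⟨Finset.mem_univ _, ?_, k.isLt⟩
      rw [hA]
      simp only [dif_pos k.isLt]
      exact (Finset.mem_filter.mp hk).2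
  have hc2 : (Finset.univ.filter fun t : Fin T => A t i = g ∧ ¬ (t:ℕ) < r).card = q := by
    rw [← count_mod_card n q a hn han]
    refine Finset.card_bij (fun t _ => (t:ℕ) - r) ?_ ?_ ?_
    · intro t ht
      obtain ⟨-, h1, h2⟩ := Finset.mem_filter.mp ht
      rw [Finset.mem_filter, Finset.mem_range]
      have hrt : r ≤ (t:ℕ) := not_lt.mp h2
      refine ⟨?_, ?_⟩
      · show (t:ℕ) - r < n * q
        have := t.isLt; omega
      · show ((t:ℕ) - r) % n = a
        rw [hA] at h1
        simp only [dif_neg h2, Equiv.coe_addRight] at h1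
        have hc : ((((t:ℕ) - r) : ℕ) : Fin n) = g - i := by
          rw [add_comm] at h1
          exact eq_sub_of_add_eq h1
        have := congrArg Fin.val hc
        rwa [Fin.val_natCast] at this
    · intro t1 h1 t2 h2 heq
      obtain ⟨-, -, hr1⟩ := Finset.mem_filter.mp h1
      obtain ⟨-, -, hr2⟩ := Finset.mem_filter.mp h2
      have heq' : (t1:ℕ) - r = (t2:ℕ) - r := heq
      apply Fin.ext
      omega
    · intro s hs
      rw [Finset.mem_filter, Finset.mem_range] at hs
      obtain ⟨hs1, hs2⟩ := hs
      have hsT : s + r < T := by omega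
      refine ⟨⟨s + r, hsT⟩, ?_, by simp⟩
      rw [Finset.mem_filter]
      have hnl : ¬ ((⟨s + r, hsT⟩ : Fin T) : ℕ) < r := by simp
      refine ⟨Finset.mem_univ _, ?_, hnl⟩
      rw [hA]
      have hval : (((s + r - r : ℕ)) : Fin n) = g - i := by
        apply Fin.ext
        rw [Fin.val_natCast]
        simp only [Nat.add_sub_cancel]
        rw [hs2, ← ha]
      simp only [dif_neg hnl, Equiv.coe_addRight]
      show i + _ = g
      rw [hval, add_comm]
      exact sub_add_cancel g i
  unfold mult
  omega

end Aux

/-- For identical non-negative valuations, an EF1 repeated matching exists. -/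
theorem stmt4 (n T : ℕ) (v : Fin n → ℕ → ℝ)
    (hnonneg : ∀ (g : Fin n) (t : ℕ), 1 ≤ t → t ≤ T → 0 ≤ v g t) :
    ∃ A : Fin T → Fin n ≃ Fin n, EF1 (fun _ : Fin n => v) A := by
  rcases Nat.eq_zero_or_pos n with hn0 | hn
  · subst hn0
    exact ⟨fun _ => Equiv.refl _, fun i => i.elim0⟩
  haveI : NeZero n := ⟨hn.ne'⟩
  obtain ⟨q, r, hT, hrn⟩ : ∃ q r, n * q + r = T ∧ r < n :=
    ⟨T / n, T % n, Nat.div_add_mod T n, Nat.mod_lt T hn⟩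
  have hqT : q ≤ T := by
    have : q ≤ n * q := Nat.le_mul_of_pos_left q hn
    omega
  rcases r with _ | m
  · -- r = 0 : all bundles identical
    obtain ⟨A, hA⟩ := mult_formula hn hT (fun _ : Fin 0 => Equiv.refl (Fin n))
    have hmul : ∀ (i' : Fin n) (g : Fin n), mult A i' g = q := by
      intro i' g
      rw [hA]
      have : (Finset.univ.filter fun k : Fin 0 => (Equiv.refl (Fin n)) i' = g) = ∅ :=
        Finset.eq_empty_of_isEmpty _
      rw [this, Finset.card_empty, zero_add]
    refine ⟨A, fun i j => ⟨⟨0, hn⟩, ?_⟩⟩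
    have heq : mult A i = mult A j := funext fun g => by rw [hmul i g, hmul j g]
    show bundleValue v (mult A i) ≥ bundleValue v (removeOne (mult A j) ⟨0, hn⟩)
    rw [heq]
    exact bundleValue_removeOne_le v (mult A j) _ T
      (fun g' => by rw [hmul j g']; exact hqT) hnonneg
  · -- r = m + 1 > 0
    set r : ℕ := m + 1 with hrdef
    have hrpos : 0 < r := Nat.succ_pos m
    have hrle : r ≤ n := le_of_lt hrn
    have hq1T : q + 1 ≤ T := by
      have : q ≤ n * q := Nat.le_mul_of_pos_left q hn
      omega
    set w : Fin n → ℝ := fun g => v g (q+1) with hw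
    set ρ : Equiv.Perm (Fin n) := Tuple.sort (fun g => -(w g)) with hρ
    have hmono := Tuple.monotone_sort (fun g => -(w g))
    have hanti : ∀ p p' : Fin n, p ≤ p' → w (ρ p') ≤ w (ρ p) := by
      intro p p' h
      have h2 := hmono h
      simp only [Function.comp_apply] at h2
      rw [← hρ] at h2
      linarith
    have hposlt : ∀ (l : Fin r) (i : Fin n), ((l:ℕ)*n + (i:ℕ))/r < n := by
      intro l i
      rw [Nat.div_lt_iff_lt_mul hrpos]
      have h1 := l.isLt
      have h2 := i.isLt
      nlinarith
    set P : Fin n → Fin r → Fin n := fun i l => ρ ⟨((l:ℕ)*n + (i:ℕ))/r, hposlt l i⟩ with hP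
    have hPinj : ∀ i, Function.Injective (P i) := by
      intro i l l' h
      rw [hP] at h
      have h2 : ((l:ℕ)*n + (i:ℕ))/r = ((l':ℕ)*n + (i:ℕ))/r :=
        congrArg Fin.val (ρ.injective h)
      by_contra hne
      have hne' : (l:ℕ) ≠ (l':ℕ) := fun hh => hne (Fin.ext hh)
      rcases hne'.lt_or_gt with hlt | hlt
      · exact absurd h2 (Nat.ne_of_lt (pos_strict hrle hrpos hlt))
      · exact absurd h2.symm (Nat.ne_of_lt (pos_strict hrle hrpos hlt))
    set E : Fin n → Finset (Fin n) := fun i => Finset.univ.image (P i) with hE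
    have hcard : ∀ i, (E i).card = r := by
      intro i
      rw [hE]
      simp only
      rw [Finset.card_image_of_injective _ (hPinj i), Finset.card_univ, Fintype.card_fin]
    have hreg : ∀ g, (Finset.univ.filter fun i => g ∈ E i).card = r := by
      intro g
      set p : Fin n := ρ.symm g with hp
      have hmemiff : ∀ i : Fin n, g ∈ E i ↔ ∃ k : Fin r, ((k:ℕ)*n + (i:ℕ))/r = (p:ℕ) := by
        intro i
        rw [hE]
        simp only [Finset.mem_image, Finset.mem_univ, true_and]
        constructor
        · rintro ⟨k, hk⟩
          refine ⟨k, ?_⟩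
          rw [hP] at hk
          have h2 : (⟨((k:ℕ)*n + (i:ℕ))/r, hposlt k i⟩ : Fin n) = ρ.symm g := by
            rw [Equiv.eq_symm_apply]
            exact hk
          rw [hp]
          exact congrArg Fin.val h2
        · rintro ⟨k, hk⟩
          refine ⟨k, ?_⟩
          rw [hP]
          have h2 : (⟨((k:ℕ)*n + (i:ℕ))/r, hposlt k i⟩ : Fin n) = p := Fin.ext hk
          show ρ (⟨((k:ℕ)*n + (i:ℕ))/r, hposlt k i⟩ : Fin n) = g
          rw [h2, hp, Equiv.apply_symm_apply]
      have hbij : (Finset.range r).card = (Finset.univ.filter fun i => g ∈ E i).card := by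
        refine Finset.card_bij
          (fun k _ => (⟨((p:ℕ)*r + k) % n, Nat.mod_lt _ hn⟩ : Fin n)) ?_ ?_ ?_
        · intro k hk
          rw [Finset.mem_range] at hk
          rw [Finset.mem_filter]
          refine ⟨Finset.mem_univ _, (hmemiff _).mpr ?_⟩
          have hlt : ((p:ℕ)*r + k)/n < r := by
            rw [Nat.div_lt_iff_lt_mul hn]
            have := p.isLt
            nlinarith
          refine ⟨⟨((p:ℕ)*r + k)/n, hlt⟩, ?_⟩
          show (((p:ℕ)*r + k)/n * n + (((p:ℕ)*r + k) % n)) / r = (p:ℕ)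
          have h1 : ((p:ℕ)*r + k)/n*n + ((p:ℕ)*r + k)%n = (p:ℕ)*r + k := by
            rw [mul_comm]
            exact Nat.div_add_mod _ n
          rw [h1, show (p:ℕ)*r + k = r*(p:ℕ) + k from by ring,
            Nat.mul_add_div hrpos, Nat.div_eq_of_lt hk, add_zero]
        · intro k1 h1 k2 h2 heq
          rw [Finset.mem_range] at h1 h2
          have hmeq : ((p:ℕ)*r + k1) % n = ((p:ℕ)*r + k2) % n := by
            have := congrArg Fin.val heq
            exact this
          have h3 : k1 % n = k2 % n := Nat.ModEq.add_left_cancel' _ hmeq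
          rwa [Nat.mod_eq_of_lt (lt_of_lt_of_le h1 hrle),
            Nat.mod_eq_of_lt (lt_of_lt_of_le h2 hrle)] at h3
        · intro i hi
          rw [Finset.mem_filter] at hi
          obtain ⟨k, hk⟩ := (hmemiff i).mp hi.2
          have h2 := Nat.div_add_mod ((k:ℕ)*n + (i:ℕ)) r
          rw [hk] at h2
          refine ⟨((k:ℕ)*n + (i:ℕ)) % r, Finset.mem_range.mpr (Nat.mod_lt _ hrpos), ?_⟩
          apply Fin.ext
          show ((p:ℕ)*r + ((k:ℕ)*n + (i:ℕ)) % r) % n = (i:ℕ)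
          have h3 : (p:ℕ)*r + ((k:ℕ)*n + (i:ℕ)) % r = (k:ℕ)*n + (i:ℕ) := by
            rw [mul_comm]
            exact h2
          rw [h3, mul_comm ((k:ℕ)) n, Nat.mul_add_mod, Nat.mod_eq_of_lt i.isLt]
      rw [← hbij, Finset.card_range]
    obtain ⟨σ, hσ⟩ := decompose r E hcard hreg
    obtain ⟨A, hA⟩ := mult_formula hn hT σ
    have hinjσ : ∀ i, Function.Injective (fun k : Fin r => σ k i) := by
      intro i
      have h1 : (Finset.univ.image fun k : Fin r => σ k i).card = (Finset.univ : Finset (Fin r)).card := by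
        rw [← hσ i, hcard i, Finset.card_univ, Fintype.card_fin]
      have h2 := Finset.card_image_iff.mp h1
      intro a b hab
      exact h2 (Finset.mem_coe.mpr (Finset.mem_univ a)) (Finset.mem_coe.mpr (Finset.mem_univ b)) hab
    have hmult : ∀ i g, mult A i g = (if g ∈ E i then 1 else 0) + q := by
      intro i g
      rw [hA i g]
      congr 1
      by_cases hmem : g ∈ E i
      · rw [if_pos hmem]
        rw [hσ i] at hmem
        obtain ⟨k0, -, hk0⟩ := Finset.mem_image.mp hmem
        rw [Finset.card_eq_one]
        refine ⟨k0, ?_⟩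
        ext k
        simp only [Finset.mem_filter, Finset.mem_univ, true_and, Finset.mem_singleton]
        constructor
        · intro h
          exact hinjσ i (h.trans hk0.symm)
        · rintro rfl
          exact hk0
      · rw [if_neg hmem, Finset.card_eq_zero, Finset.filter_eq_empty_iff]
        intro k _ h
        exact hmem (by rw [hσ i]; exact Finset.mem_image.mpr ⟨k, Finset.mem_univ _, h⟩)
    have hbv : ∀ i, bundleValue v (mult A i)
        = (∑ g : Fin n, ∑ t ∈ Finset.range q, v g (t+1)) + ∑ k : Fin r, w (P i k) := by
      intro i
      unfold bundleValue
      have hsplit : ∀ g : Fin n, (∑ t ∈ Finset.range (mult A i g), v g (t+1))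
          = (∑ t ∈ Finset.range q, v g (t+1)) + (if g ∈ E i then w g else 0) := by
        intro g
        rw [hmult i g]
        by_cases hmem : g ∈ E i
        · rw [if_pos hmem, if_pos hmem,
            show (1 : ℕ) + q = q + 1 from by omega, Finset.sum_range_succ, hw]
        · rw [if_neg hmem, if_neg hmem, zero_add, add_zero]
      rw [Finset.sum_congr rfl (fun g _ => hsplit g), Finset.sum_add_distrib]
      congr 1
      rw [Finset.sum_ite_mem, Finset.univ_inter, hE]
      exact Finset.sum_image (fun k _ k' _ h => hPinj i h)
    -- EF1
    refine ⟨A, fun i j => ?_⟩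
    have hg0mem : P j 0 ∈ E j := by
      rw [hE]
      exact Finset.mem_image.mpr ⟨0, Finset.mem_univ _, rfl⟩
    have hBj : mult A j (P j 0) = q + 1 := by
      rw [hmult j _, if_pos hg0mem]
      omega
    refine ⟨P j 0, ?_⟩
    show bundleValue v (mult A i) ≥ bundleValue v (removeOne (mult A j) (P j 0))
    rw [bundleValue_removeOne_eq v (mult A j) (P j 0) q hBj, hbv i, hbv j]
    have hvP : v (P j 0) (q+1) = w (P j 0) := rfl
    rw [hvP]
    have hkey : (∑ k : Fin r, w (P j k)) - w (P j 0) ≤ ∑ k : Fin r, w (P i k) := by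
      have hsj : (∑ k : Fin r, w (P j k)) = w (P j 0) + ∑ k : Fin m, w (P j k.succ) :=
        Fin.sum_univ_succ _
      have hsi : (∑ k : Fin r, w (P i k))
          = (∑ k : Fin m, w (P i k.castSucc)) + w (P i (Fin.last m)) :=
        Fin.sum_univ_castSucc _
      have hterm : ∀ k : Fin m, w (P j k.succ) ≤ w (P i k.castSucc) := by
        intro k
        apply hanti
        show (((k.castSucc:ℕ)*n + (i:ℕ))/r : ℕ) ≤ ((k.succ:ℕ)*n + (j:ℕ))/r
        rw [Fin.coe_castSucc, Fin.val_succ]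
        exact pos_dom i.isLt (k:ℕ)
      have hlast : 0 ≤ w (P i (Fin.last m)) := hnonneg _ (q+1) (by omega) hq1T
      have hsum : ∑ k : Fin m, w (P j k.succ) ≤ ∑ k : Fin m, w (P i k.castSucc) :=
        Finset.sum_le_sum fun k _ => hterm k
      rw [hsj, hsi]
      linarith
    linarith
end

section
/- Let I be a repeated matching instance with n agents/items and T rounds such that T mod n ∈ {0, 1, 2}, and in which all valuations are non-negative (goods), i.e., v_i(g,t) ≥ 0 for every agent i, item g, and t ∈ {1,...,T}. Then there exists a repeated matching of I that is EF1. -/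
open Finset
open Fin.NatCast

lemma avail_nonempty {n m : ℕ} (h : m < n) (f : Fin m → Fin n) :
    ((univ : Finset (Fin n)) \ univ.image f).Nonempty := by
  rw [Finset.sdiff_nonempty]
  intro hsub
  have h1 := Finset.card_le_card hsub
  have h2 := Finset.card_image_le (s := (univ : Finset (Fin m))) (f := f)
  simp only [Finset.card_univ, Fintype.card_fin] at h1 h2
  omega

noncomputable def greedy {n : ℕ} (u : Fin n → Fin n → ℝ) : Fin n → Fin n
  | i =>
    Classical.choose (Finset.exists_max_image
      ((univ : Finset (Fin n)) \ univ.image fun k : Fin i.val => greedy u ⟨k.val, k.isLt.trans i.isLt⟩)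
      (u i)
      (avail_nonempty i.isLt (fun k : Fin i.val => greedy u ⟨k.val, k.isLt.trans i.isLt⟩)))
termination_by i => i.val

lemma greedy_spec {n : ℕ} (u : Fin n → Fin n → ℝ) (i : Fin n) :
    (greedy u i ∈ ((univ : Finset (Fin n)) \ (Finset.univ.image fun k : Fin i.val =>
        greedy u ⟨k.val, k.isLt.trans i.isLt⟩))) ∧
    ∀ g ∈ ((univ : Finset (Fin n)) \ (Finset.univ.image fun k : Fin i.val =>
        greedy u ⟨k.val, k.isLt.trans i.isLt⟩)), u i g ≤ u i (greedy u i) := by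
  rw [greedy]
  exact Classical.choose_spec (Finset.exists_max_image _ (u i)
    (avail_nonempty i.isLt (fun k : Fin i.val => greedy u ⟨k.val, k.isLt.trans i.isLt⟩)))

lemma greedy_ne {n : ℕ} (u : Fin n → Fin n → ℝ) {k i : Fin n} (h : k < i) :
    greedy u k ≠ greedy u i := by
  have := (greedy_spec u i).1
  rw [Finset.mem_sdiff, Finset.mem_image] at this
  intro he
  exact this.2 ⟨⟨k.val, h⟩, Finset.mem_univ _, he⟩

lemma greedy_inj {n : ℕ} (u : Fin n → Fin n → ℝ) : Function.Injective (greedy u) := by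
  intro a b hab
  by_contra hne
  rcases lt_or_gt_of_ne hne with h | h
  · exact greedy_ne u h hab
  · exact greedy_ne u h hab.symm

lemma greedy_max {n : ℕ} (u : Fin n → Fin n → ℝ) {i j : Fin n} (h : i ≤ j) :
    u i (greedy u j) ≤ u i (greedy u i) := by
  rcases eq_or_lt_of_le h with rfl | h
  · exact le_refl _
  · apply (greedy_spec u i).2
    rw [Finset.mem_sdiff, Finset.mem_image]
    refine ⟨Finset.mem_univ _, ?_⟩
    rintro ⟨k, -, hk⟩
    exact greedy_ne u (show (⟨k.val, k.isLt.trans i.isLt⟩ : Fin n) < j from lt_trans k.isLt h) hk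


lemma count_mod (n a : ℕ) (hn : 0 < n) (ha : a < n) :
    ∀ T : ℕ, ((Finset.range T).filter fun t => t % n = a).card
      = T / n + if a < T % n then 1 else 0
  | 0 => by simp
  | (T+1) => by
    rw [Finset.range_add_one, Finset.filter_insert]
    have ih := count_mod n a hn ha T
    have hdm := Nat.div_add_mod T n
    have hr : T % n < n := Nat.mod_lt T hn
    by_cases hd : T % n + 1 = n
    · have hmul : n * (T / n + 1) = n * (T / n) + n := Nat.mul_succ n (T/n)
      have hT1 : T + 1 = n * (T / n + 1) := by omega
      have hdiv : (T+1) / n = T / n + 1 := by rw [hT1, Nat.mul_div_cancel_left _ hn]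
      have hmod : (T+1) % n = 0 := by rw [hT1, Nat.mul_mod_right]
      by_cases h : T % n = a
      · rw [if_pos h, Finset.card_insert_of_notMem (by simp), ih, hdiv, hmod]
        rw [if_neg (by omega : ¬ a < T % n), if_neg (by omega : ¬ a < 0)]
      · rw [if_neg h, ih, hdiv, hmod]
        rw [if_pos (by omega : a < T % n), if_neg (by omega : ¬ a < 0)]
    · have hT1 : T + 1 = (T % n + 1) + n * (T / n) := by omega
      have hdiv : (T+1) / n = T / n := by
        rw [hT1, Nat.add_mul_div_left _ _ hn, Nat.div_eq_of_lt (by omega)]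
        omega
      have hmod : (T+1) % n = T % n + 1 := by
        rw [hT1, Nat.add_mul_mod_self_left, Nat.mod_eq_of_lt (by omega)]
      by_cases h : T % n = a
      · rw [if_pos h, Finset.card_insert_of_notMem (by simp), ih, hdiv, hmod]
        rw [if_neg (by omega : ¬ a < T % n), if_pos (by omega : a < T % n + 1)]
      · rw [if_neg h, ih, hdiv, hmod]
        congr 1
        by_cases h2 : a < T % n
        · rw [if_pos h2, if_pos (by omega)]
        · rw [if_neg h2, if_neg (by omega)]

lemma mult_comp {n : ℕ} {T : ℕ} (P : ℕ → Fin n ≃ Fin n) (i g : Fin n) :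
    (Finset.univ.filter fun t : Fin T => P t.val i = g).card
      = ((Finset.range T).filter fun m => P m i = g).card := by
  rw [Finset.card_filter, Finset.card_filter]
  exact Fin.sum_univ_eq_sum_range (fun m => if P m i = g then 1 else 0) T

lemma rot_iff {n : ℕ} [NeZero n] (i g : Fin n) (m : ℕ) :
    (i + ((m : ℕ) : Fin n) = g) ↔ (m % n = (g - i).val) := by
  constructor
  · intro h
    have : ((m : ℕ) : Fin n) = g - i := by rw [← h]; abel
    rw [← this, Fin.val_natCast]
  · intro h
    have : ((m : ℕ) : Fin n) = g - i := Fin.ext (by rw [Fin.val_natCast]; exact h)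
    rw [this]; abel

lemma rot_count {n T : ℕ} [NeZero n] (i g : Fin n) :
    ((Finset.range T).filter fun m => i + ((m : ℕ) : Fin n) = g).card
      = T / n + if (g - i).val < T % n then 1 else 0 := by
  have hn : 0 < n := Nat.pos_of_ne_zero (NeZero.ne n)
  rw [show ((Finset.range T).filter fun m => i + ((m : ℕ) : Fin n) = g)
      = ((Finset.range T).filter fun m => m % n = (g - i).val) from
    Finset.filter_congr fun m _ => by rw [rot_iff]]
  exact count_mod n (g - i).val hn (g - i).isLt T


lemma mult_rot {n T : ℕ} [NeZero n] (i g : Fin n) :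
    mult (fun t : Fin T => Equiv.addRight ((t.val : ℕ) : Fin n)) i g
      = T / n + if (g - i).val < T % n then 1 else 0 := by
  rw [mult, mult_comp (fun m => Equiv.addRight ((m : ℕ) : Fin n)) i g]
  exact rot_count i g

lemma mult_two {n T q : ℕ} [NeZero n] (hT : T = n * q + 2) (π ρ : Fin n ≃ Fin n) (i g : Fin n) :
    mult (fun t : Fin T =>
        if t.val < n * q then Equiv.addRight ((t.val : ℕ) : Fin n)
        else if t.val = n * q then π else ρ) i g
      = q + ((if π i = g then 1 else 0) + (if ρ i = g then 1 else 0)) := by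
  have hn : 0 < n := Nat.pos_of_ne_zero (NeZero.ne n)
  rw [mult, mult_comp (fun m => if m < n * q then Equiv.addRight ((m : ℕ) : Fin n)
      else if m = n * q then π else ρ) i g]
  subst hT
  rw [Finset.card_filter, Finset.sum_range_succ, Finset.sum_range_succ]
  have e1 : ∑ m ∈ Finset.range (n * q), (if (if m < n * q then Equiv.addRight ((m : ℕ) : Fin n)
      else if m = n * q then π else ρ) i = g then 1 else 0)
      = ∑ m ∈ Finset.range (n * q), (if i + ((m : ℕ) : Fin n) = g then 1 else 0) := by
    apply Finset.sum_congr rfl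
    intro m hm
    rw [Finset.mem_range] at hm
    rw [if_pos hm]
    rfl
  rw [e1, ← Finset.card_filter, rot_count i g, Nat.mul_div_cancel_left _ hn, Nat.mul_mod_right]
  rw [if_neg (by omega : ¬ (g - i).val < 0)]
  rw [if_neg (by omega : ¬ n * q < n * q), if_pos rfl]
  rw [if_neg (by omega : ¬ n * q + 1 < n * q), if_neg (by omega : ¬ n * q + 1 = n * q)]
  omega

lemma bundleValue_mono {n T : ℕ} (v : Fin n → ℕ → ℝ)
    (hv : ∀ g t, 1 ≤ t → t ≤ T → 0 ≤ v g t) (B B' : Fin n → ℕ)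
    (hB : ∀ g, B' g ≤ B g) (hT : ∀ g, B g ≤ T) :
    bundleValue v B' ≤ bundleValue v B := by
  apply Finset.sum_le_sum
  intro g _
  apply Finset.sum_le_sum_of_subset_of_nonneg
  · exact Finset.range_subset_range.mpr (hB g)
  · intro t ht _
    rw [Finset.mem_range] at ht
    exact hv g (t+1) (by omega) (by have := hT g; omega)

lemma bundleValue_const_add {n : ℕ} (v : Fin n → ℕ → ℝ) (q : ℕ) (a : Fin n → ℕ) :
    bundleValue v (fun g => q + a g)
      = bundleValue v (fun _ => q) + ∑ g : Fin n, ∑ t ∈ Finset.range (a g), v g (q + t + 1) := by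
  rw [bundleValue, bundleValue, ← Finset.sum_add_distrib]
  apply Finset.sum_congr rfl
  intro g _
  rw [Finset.sum_range_add]

lemma sum_ind_one {n : ℕ} (v : Fin n → ℕ → ℝ) (q : ℕ) (c : Fin n) :
    ∑ g : Fin n, ∑ t ∈ Finset.range (if c = g then 1 else 0), v g (q + t + 1)
      = v c (q + 1) := by
  have e : ∀ g : Fin n, ∑ t ∈ Finset.range (if c = g then 1 else 0), v g (q + t + 1)
      = if c = g then v g (q + 1) else 0 := by
    intro g; split_ifs <;> simp
  rw [Finset.sum_congr rfl fun g _ => e g, Finset.sum_ite_eq]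
  simp

lemma sum_ind_two_ne {n : ℕ} (v : Fin n → ℕ → ℝ) (q : ℕ) {c1 c2 : Fin n} (h : c1 ≠ c2) :
    ∑ g : Fin n, ∑ t ∈ Finset.range ((if c1 = g then 1 else 0) + (if c2 = g then 1 else 0)),
        v g (q + t + 1)
      = v c1 (q + 1) + v c2 (q + 1) := by
  have e : ∀ g : Fin n, ∑ t ∈ Finset.range ((if c1 = g then 1 else 0) + (if c2 = g then 1 else 0)),
        v g (q + t + 1)
      = (if c1 = g then v g (q + 1) else 0) + (if c2 = g then v g (q + 1) else 0) := by
    intro g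
    by_cases h1 : c1 = g <;> by_cases h2 : c2 = g
    · exact absurd (h1.trans h2.symm) h
    · simp [h1, h2]
    · simp [h1, h2]
    · simp [h1, h2]
  rw [Finset.sum_congr rfl fun g _ => e g, Finset.sum_add_distrib,
    Finset.sum_ite_eq, Finset.sum_ite_eq]
  simp

lemma sum_ind_two_eq {n : ℕ} (v : Fin n → ℕ → ℝ) (q : ℕ) (c : Fin n) :
    ∑ g : Fin n, ∑ t ∈ Finset.range ((if c = g then 1 else 0) + (if c = g then 1 else 0)),
        v g (q + t + 1)
      = v c (q + 1) + v c (q + 2) := by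
  have e : ∀ g : Fin n, ∑ t ∈ Finset.range ((if c = g then 1 else 0) + (if c = g then 1 else 0)),
        v g (q + t + 1)
      = if c = g then v g (q + 1) + v g (q + 2) else 0 := by
    intro g
    by_cases h1 : c = g
    · subst h1
      simp only [if_pos rfl]
      rw [show ((if True then 1 else 0) + if True then 1 else 0 : ℕ) = 2 by simp,
        Finset.sum_range_succ, Finset.sum_range_one]
      norm_num
    · simp [h1]
  rw [Finset.sum_congr rfl fun g _ => e g, Finset.sum_ite_eq]
  simp


noncomputable def pi0 (n q : ℕ) (v : Fin n → Fin n → ℕ → ℝ) : Fin n → Fin n :=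
  greedy (fun i g => v i g (q + 1))

noncomputable def uu2 (n q : ℕ) (v : Fin n → Fin n → ℕ → ℝ) : Fin n → Fin n → ℝ :=
  fun k g => if g = pi0 n q v k.rev then v k.rev g (q + 2) else v k.rev g (q + 1)

noncomputable def rho0 (n q : ℕ) (v : Fin n → Fin n → ℕ → ℝ) : Fin n → Fin n :=
  fun i => greedy (uu2 n q v) i.rev

lemma pi0_max {n q : ℕ} (v : Fin n → Fin n → ℕ → ℝ) {i j : Fin n} (h : i ≤ j) :
    v i (pi0 n q v j) (q + 1) ≤ v i (pi0 n q v i) (q + 1) :=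
  greedy_max (fun i g => v i g (q + 1)) h

lemma uu2_rev {n q : ℕ} (v : Fin n → Fin n → ℕ → ℝ) (i : Fin n) (g : Fin n) :
    uu2 n q v i.rev g = if g = pi0 n q v i then v i g (q + 2) else v i g (q + 1) := by
  simp [uu2, Fin.rev_rev]

lemma rho0_max {n q : ℕ} (v : Fin n → Fin n → ℕ → ℝ) {i j : Fin n} (h : j ≤ i) :
    uu2 n q v i.rev (rho0 n q v j) ≤ uu2 n q v i.rev (rho0 n q v i) :=
  greedy_max (uu2 n q v) (Fin.rev_le_rev.mpr h)

lemma pi0_inj {n q : ℕ} (v : Fin n → Fin n → ℕ → ℝ) : Function.Injective (pi0 n q v) :=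
  greedy_inj _

lemma rho0_inj {n q : ℕ} (v : Fin n → Fin n → ℕ → ℝ) : Function.Injective (rho0 n q v) :=
  fun a b h => Fin.rev_injective (greedy_inj _ h)

/-- For goods (non-negative valuations) with `T mod n ∈ {0,1,2}`, an EF1 repeated
matching exists. -/
theorem stmt5 (n T : ℕ) (hmod : T % n = 0 ∨ T % n = 1 ∨ T % n = 2)
    (v : Fin n → Fin n → ℕ → ℝ)
    (hnonneg : ∀ (i g : Fin n) (t : ℕ), 1 ≤ t → t ≤ T → 0 ≤ v i g t) :
    ∃ A : Fin T → Fin n ≃ Fin n, EF1 v A := by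
  rcases Nat.eq_zero_or_pos n with hn0 | hn
  · subst hn0
    exact ⟨fun _ => Equiv.refl _, fun i _ => i.elim0⟩
  haveI : NeZero n := ⟨hn.ne'⟩
  have hdm := Nat.div_add_mod T n
  have hmultle : ∀ (A : Fin T → Fin n ≃ Fin n) (j g : Fin n), mult A j g ≤ T := by
    intro A j g
    calc mult A j g ≤ (Finset.univ : Finset (Fin T)).card := Finset.card_filter_le _ _
    _ = T := by simp
  rcases hmod with h0 | h1 | h2
  · -- case T % n = 0
    refine ⟨fun t : Fin T => Equiv.addRight ((t.val : ℕ) : Fin n), fun i j => ⟨i, ?_⟩⟩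
    have hmi : ∀ (k : Fin n),
        mult (fun t : Fin T => Equiv.addRight ((t.val : ℕ) : Fin n)) k = fun _ => T / n := by
      intro k; funext g
      rw [mult_rot, h0, if_neg (show ¬ (g - k).val < 0 by omega)]
      exact Nat.add_zero _
    rw [ge_iff_le, hmi i, hmi j]
    apply bundleValue_mono (T := T) (v i) (fun g t ht1 ht2 => hnonneg i g t ht1 ht2)
    · intro g
      simp only [removeOne]
      split
      · exact Nat.sub_le _ _
      · exact le_refl _
    · intro g
      exact Nat.div_le_self T n
  · -- case T % n = 1
    refine ⟨fun t : Fin T => Equiv.addRight ((t.val : ℕ) : Fin n), fun i j => ⟨j, ?_⟩⟩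
    have hmi : ∀ (k g : Fin n),
        mult (fun t : Fin T => Equiv.addRight ((t.val : ℕ) : Fin n)) k g
          = T / n + if g = k then 1 else 0 := by
      intro k g; rw [mult_rot, h1]
      congr 1
      by_cases h : g = k
      · subst h; simp
      · have hne : ¬ (g - k).val < 1 := by
          intro hc
          have h0' : g - k = 0 := Fin.ext (by
            rw [Fin.val_zero]
            omega)
          exact h (by rwa [sub_eq_zero] at h0')
        rw [if_neg hne, if_neg h]
    have hrm : removeOne (mult (fun t : Fin T => Equiv.addRight ((t.val : ℕ) : Fin n)) j) j
        = fun _ => T / n := by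
      funext g
      simp only [removeOne, hmi j]
      by_cases h : g = j
      · rw [if_pos h, if_pos h]
        exact Nat.add_sub_cancel _ _
      · rw [if_neg h, if_neg h]
        exact Nat.add_zero _
    rw [ge_iff_le, hrm]
    apply bundleValue_mono (T := T) (v i) (fun g t ht1 ht2 => hnonneg i g t ht1 ht2)
    · intro g; rw [hmi i g]; exact Nat.le_add_right _ _
    · intro g; exact hmultle _ i g
  · -- case T % n = 2
    obtain ⟨q, hq⟩ : ∃ q, T / n = q := ⟨_, rfl⟩
    rw [hq] at hdm
    have hT2 : T = n * q + 2 := by omega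
    have hnq : q ≤ n * q := Nat.le_mul_of_pos_left q hn
    have hqT1 : q + 1 ≤ T := by omega
    have hqT2 : q + 2 ≤ T := by omega
    set P := pi0 n q v with hP
    set R := rho0 n q v with hR
    set π : Fin n ≃ Fin n :=
      Equiv.ofBijective P (Finite.injective_iff_bijective.mp (pi0_inj v)) with hπ
    set ρ : Fin n ≃ Fin n :=
      Equiv.ofBijective R (Finite.injective_iff_bijective.mp (rho0_inj v)) with hρ
    set A : Fin T → Fin n ≃ Fin n := fun t =>
      if t.val < n * q then Equiv.addRight ((t.val : ℕ) : Fin n)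
      else if t.val = n * q then π else ρ with hA
    have hm : ∀ (k g : Fin n),
        mult A k g = q + ((if P k = g then 1 else 0) + (if R k = g then 1 else 0)) :=
      fun k g => mult_two hT2 π ρ k g
    refine ⟨A, ?_⟩
    intro i j
    have hM0 : (0:ℝ) ≤ (if R i = P i then v i (R i) (q+2) else v i (R i) (q+1)) := by
      split_ifs
      · exact hnonneg i (R i) (q+2) (by omega) hqT2
      · exact hnonneg i (R i) (q+1) (by omega) hqT1
    have hval : bundleValue (v i) (mult A i)
        = bundleValue (v i) (fun _ => q)
          + (v i (P i) (q+1) + (if R i = P i then v i (R i) (q+2) else v i (R i) (q+1))) := by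
      have hmk : mult A i
          = fun g => q + ((if P i = g then 1 else 0) + (if R i = g then 1 else 0)) :=
        funext (hm i)
      rw [hmk, bundleValue_const_add]
      congr 1
      by_cases hc : R i = P i
      · rw [hc, if_pos (rfl : P i = P i)]
        exact sum_ind_two_eq (v i) q (P i)
      · rw [if_neg hc]
        exact sum_ind_two_ne (v i) q (fun h => hc h.symm)
    rcases le_total i j with hij | hij
    · refine ⟨R j, ?_⟩
      have hrm : removeOne (mult A j) (R j) = fun g => q + (if P j = g then 1 else 0) := by
        funext g
        simp only [removeOne, hm j]
        rcases eq_or_ne g (R j) with hg | hg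
        · rw [if_pos hg]
          rw [show (if R j = g then (1:ℕ) else 0) = 1 from if_pos hg.symm]
          generalize (if P j = g then (1:ℕ) else 0) = x
          omega
        · rw [if_neg hg]
          rw [show (if R j = g then (1:ℕ) else 0) = 0 from if_neg (fun h => hg h.symm)]
          generalize (if P j = g then (1:ℕ) else 0) = x
          omega
      rw [hrm, bundleValue_const_add, sum_ind_one, hval]
      have h1 : v i (P j) (q+1) ≤ v i (P i) (q+1) := pi0_max v hij
      linarith [hM0]
    · refine ⟨P j, ?_⟩
      have hrm : removeOne (mult A j) (P j) = fun g => q + (if R j = g then 1 else 0) := by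
        funext g
        simp only [removeOne, hm j]
        rcases eq_or_ne g (P j) with hg | hg
        · rw [if_pos hg]
          rw [show (if P j = g then (1:ℕ) else 0) = 1 from if_pos hg.symm]
          generalize (if R j = g then (1:ℕ) else 0) = x
          omega
        · rw [if_neg hg]
          rw [show (if P j = g then (1:ℕ) else 0) = 0 from if_neg (fun h => hg h.symm)]
          generalize (if R j = g then (1:ℕ) else 0) = x
          omega
      rw [hrm, bundleValue_const_add, sum_ind_one, hval]
      have hw0 : (0:ℝ) ≤ v i (P i) (q+1) := hnonneg i (P i) (q+1) (by omega) hqT1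
      by_cases hc : R j = P i
      · rw [hc]
        linarith [hM0]
      · have hg2 := rho0_max (q := q) v hij
        rw [uu2_rev, uu2_rev, if_neg hc] at hg2
        linarith [hw0, hg2]
end

section
/- Let G = (V,E) be a finite graph with no isolated vertices, let 0 < δ < |V|^{−2}, and let K be the size of a maximum independent set of G. Construct the repeated matching instance I(G) with T = |V| rounds and n = (2|V|+1)|E| + 1 agents and items as follows. The agents are 'edge agents' (e,i) for each e ∈ E and i ∈ {1,...,2|V|+1}, plus one 'special agent' s. The items are one 'node item' g_u for each u ∈ V, plus n − |V| 'dummy items'. Valuations: for every edge e = (x,y), every i, every u ∈ V, and every t ∈ {1,...,T}, v_{(e,i)}(g_u,t) = δ if u ∈ {x,y} and 0 otherwise; v_s(g_u,t) = 1 for every u ∈ V and t; all agents value every copy of every dummy item at 0. Then every EF1 repeated matching of I(G) has social welfare strictly less than K + 1. -/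
open Finset

/-- The valuation in the instance `I(G)` constructed from a graph `G`:
agents are pairs (edge, copy-index in `Fin (2|V|+1)`) plus a special agent
(`Sum.inr ()`), items are node items (`Sum.inl u` for `u : V`) plus `N` dummy
items.  An edge agent values every copy of a node item of an endpoint of its edge
at `δ`, the special agent values every copy of every node item at `1`, and all
other values are `0`. -/
def graphVal {V : Type*} [Fintype V] [DecidableEq V] (G : SimpleGraph V)
    [DecidableRel G.Adj] (δ : ℝ) (N : ℕ) :
    ((G.edgeFinset × Fin (2 * Fintype.card V + 1)) ⊕ Unit) → (V ⊕ Fin N) → ℕ → ℝ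
  | Sum.inl ei, Sum.inl u, _ => if u ∈ (ei.1 : Sym2 V) then δ else 0
  | Sum.inr _, Sum.inl _, _ => 1
  | _, Sum.inr _, _ => 0

lemma sum_mult {α β : Type*} [Fintype α] [Fintype β] [DecidableEq β] {T : ℕ}
    (A : Fin T → α ≃ β) (g : β) : ∑ i : α, mult A i g = T := by
  classical
  simp only [mult, Finset.card_filter]
  rw [Finset.sum_comm]
  have h : ∀ t : Fin T, (∑ i : α, if A t i = g then 1 else 0) = 1 := by
    intro t
    rw [Finset.sum_eq_single ((A t).symm g)]
    · simp
    · intro b _ hb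
      have hne : A t b ≠ g := by
        intro h; apply hb; rw [← h, Equiv.symm_apply_apply]
      simp [hne]
    · simp
  simp [h]

lemma bundleValue_eq {β : Type*} [Fintype β] (w : β → ℝ) (v : β → ℕ → ℝ)
    (hv : ∀ g t, v g t = w g) (B : β → ℕ) :
    bundleValue v B = ∑ g : β, (B g : ℝ) * w g := by
  unfold bundleValue
  refine Finset.sum_congr rfl fun g _ => ?_
  simp [hv, Finset.sum_const, nsmul_eq_mul]

/-- If `K` is the size of a maximum independent set of a graph `G` with no
isolated vertices, then every EF1 repeated matching of the instance `I(G)`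
(with `T = |V|` rounds and `n = (2|V|+1)|E| + 1` agents/items) has social
welfare strictly less than `K + 1`. -/
theorem stmt8 {V : Type*} [Fintype V] [DecidableEq V] (G : SimpleGraph V)
    [DecidableRel G.Adj]
    (hiso : ∀ x : V, ∃ y : V, G.Adj x y)
    (δ : ℝ) (hδ0 : 0 < δ) (hδ1 : δ < 1 / (Fintype.card V : ℝ) ^ 2)
    (N : ℕ) (hN : N = (2 * Fintype.card V + 1) * G.edgeFinset.card + 1 - Fintype.card V)
    (K : ℕ)
    (hKex : ∃ s : Finset V, s.card = K ∧ ∀ x ∈ s, ∀ y ∈ s, ¬ G.Adj x y)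
    (hKmax : ∀ s : Finset V, (∀ x ∈ s, ∀ y ∈ s, ¬ G.Adj x y) → s.card ≤ K)
    (A : Fin (Fintype.card V) →
      ((G.edgeFinset × Fin (2 * Fintype.card V + 1)) ⊕ Unit) ≃ (V ⊕ Fin N))
    (hEF1 : EF1 (graphVal G δ N) A) :
    SW (graphVal G δ N) A < (K : ℝ) + 1 := by
  classical
  -- (Fintype.card V) > 0
  have hnpos : 0 < (Fintype.card V) := by
    rcases Nat.eq_zero_or_pos (Fintype.card V) with h | h
    · exfalso
      rw [h] at hδ1
      norm_num at hδ1
      linarith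
    · exact h
  have hδn : δ * ((Fintype.card V) : ℝ) ^ 2 < 1 := by
    rw [lt_div_iff₀ (by positivity)] at hδ1
    exact hδ1
  set Ns : V → ℕ := fun u => mult A (Sum.inr ()) (Sum.inl u) with hNs
  -- special agent's bundle value
  have hspecialVal : bundleValue (graphVal G δ N (Sum.inr ())) (mult A (Sum.inr ()))
      = ∑ u : V, (Ns u : ℝ) := by
    rw [bundleValue_eq (fun g => match g with | Sum.inl _ => 1 | Sum.inr _ => 0)]
    · rw [Fintype.sum_sum_type]
      simp [hNs]
    · intro g t; cases g <;> rfl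
  -- edge agent's bundle value
  have hedgeVal : ∀ (p : G.edgeFinset × Fin (2 * (Fintype.card V) + 1)) (B : V ⊕ Fin N → ℕ),
      bundleValue (graphVal G δ N (Sum.inl p)) B
      = ∑ u : V, (B (Sum.inl u) : ℝ) * (if u ∈ (p.1 : Sym2 V) then δ else 0) := by
    intro p B
    rw [bundleValue_eq (fun g => match g with
      | Sum.inl u => if u ∈ (p.1 : Sym2 V) then δ else 0
      | Sum.inr _ => 0)]
    · rw [Fintype.sum_sum_type]
      simp
    · intro g t; cases g <;> rfl
  -- key: adjacent vertices get at most 1 copy total for the special agent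
  have hkey : ∀ x y : V, G.Adj x y → Ns x + Ns y ≤ 1 := by
    intro x y hadj
    have hxy : x ≠ y := hadj.ne
    have he : s(x, y) ∈ G.edgeFinset := by
      rw [SimpleGraph.mem_edgeFinset]; exact hadj
    set E : G.edgeFinset := ⟨s(x, y), he⟩ with hE
    -- pigeonhole: some copy of edge agent holds no copy of g_x, g_y
    have hsum : ∑ i : Fin (2 * (Fintype.card V) + 1), (mult A (Sum.inl (E, i)) (Sum.inl x)
        + mult A (Sum.inl (E, i)) (Sum.inl y)) ≤ 2 * (Fintype.card V) := by
      have htot : ∑ a : ((G.edgeFinset × Fin (2 * (Fintype.card V) + 1)) ⊕ Unit),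
          (mult A a (Sum.inl x) + mult A a (Sum.inl y)) = 2 * (Fintype.card V) := by
        rw [Finset.sum_add_distrib, sum_mult, sum_mult]; ring
      calc ∑ i : Fin (2 * (Fintype.card V) + 1), (mult A (Sum.inl (E, i)) (Sum.inl x)
              + mult A (Sum.inl (E, i)) (Sum.inl y))
          ≤ ∑ a : ((G.edgeFinset × Fin (2 * (Fintype.card V) + 1)) ⊕ Unit),
              (mult A a (Sum.inl x) + mult A a (Sum.inl y)) := by
            rw [Fintype.sum_sum_type, Fintype.sum_prod_type]
            refine le_trans ?_ (Nat.le_add_right _ _)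
            exact Finset.single_le_sum
              (f := fun e' : G.edgeFinset => ∑ i : Fin (2 * (Fintype.card V) + 1),
                (mult A (Sum.inl (e', i)) (Sum.inl x) + mult A (Sum.inl (e', i)) (Sum.inl y)))
              (fun _ _ => Nat.zero_le _) (Finset.mem_univ E)
        _ = 2 * (Fintype.card V) := htot
    obtain ⟨i, hix, hiy⟩ : ∃ i : Fin (2 * (Fintype.card V) + 1),
        mult A (Sum.inl (E, i)) (Sum.inl x) = 0 ∧ mult A (Sum.inl (E, i)) (Sum.inl y) = 0 := by
      by_contra hcon
      push_neg at hcon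
      have h1 : ∀ i, 1 ≤ mult A (Sum.inl (E, i)) (Sum.inl x)
          + mult A (Sum.inl (E, i)) (Sum.inl y) := by
        intro i
        rcases Nat.eq_zero_or_pos (mult A (Sum.inl (E, i)) (Sum.inl x)) with h0 | h0
        · have := hcon i h0; omega
        · omega
      have hge := Finset.card_nsmul_le_sum (Finset.univ : Finset (Fin (2 * (Fintype.card V) + 1)))
        (fun i => mult A (Sum.inl (E, i)) (Sum.inl x) + mult A (Sum.inl (E, i)) (Sum.inl y))
        1 (fun i _ => h1 i)
      simp at hge
      omega
    -- apply EF1 from this edge agent to the special agent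
    obtain ⟨g, hg⟩ := hEF1 (Sum.inl (E, i)) (Sum.inr ())
    rw [hedgeVal, hedgeVal] at hg
    set B' : V ⊕ Fin N → ℕ := removeOne (mult A (Sum.inr ())) g with hB'
    have hown : ∑ u : V, (mult A (Sum.inl (E, i)) (Sum.inl u) : ℝ)
        * (if u ∈ (((E, i).1 : G.edgeFinset) : Sym2 V) then δ else 0) = 0 := by
      apply Finset.sum_eq_zero
      intro u _
      by_cases hu : u ∈ (((E, i).1 : G.edgeFinset) : Sym2 V)
      · have : u = x ∨ u = y := by
          simpa [hE, Sym2.mem_iff] using hu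
        rcases this with rfl | rfl
        · simp [hix]
        · simp [hiy]
      · simp [hu]
    rw [hown] at hg
    -- terms at x and y are ≤ 0, hence zero
    have hnn : ∀ u ∈ (Finset.univ : Finset V),
        (0:ℝ) ≤ (B' (Sum.inl u) : ℝ) * (if u ∈ (((E, i).1 : G.edgeFinset) : Sym2 V) then δ else 0) := by
      intro u _
      apply mul_nonneg (Nat.cast_nonneg _)
      split
      · exact hδ0.le
      · exact le_rfl
    have hmemx : x ∈ (((E, i).1 : G.edgeFinset) : Sym2 V) := by simp [hE]
    have hmemy : y ∈ (((E, i).1 : G.edgeFinset) : Sym2 V) := by simp [hE]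
    have hpair : (B' (Sum.inl x) : ℝ) * δ + (B' (Sum.inl y) : ℝ) * δ ≤ 0 := by
      have hmono := Finset.sum_le_sum_of_subset_of_nonneg
        (Finset.subset_univ ({x, y} : Finset V)) (fun u hu _ => hnn u hu)
      rw [Finset.sum_pair hxy] at hmono
      rw [if_pos hmemx, if_pos hmemy] at hmono
      linarith [hg, hmono]
    have hbx : B' (Sum.inl x) = 0 := by
      by_contra hb
      have h1 : (1:ℝ) ≤ (B' (Sum.inl x) : ℝ) := by
        exact_mod_cast Nat.one_le_iff_ne_zero.mpr hb
      nlinarith [Nat.cast_nonneg (B' (Sum.inl y)) (α := ℝ)]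
    have hby : B' (Sum.inl y) = 0 := by
      by_contra hb
      have h1 : (1:ℝ) ≤ (B' (Sum.inl y) : ℝ) := by
        exact_mod_cast Nat.one_le_iff_ne_zero.mpr hb
      nlinarith [Nat.cast_nonneg (B' (Sum.inl x)) (α := ℝ)]
    by_cases hgx : (Sum.inl x : V ⊕ Fin N) = g
    · have h1 : Ns x - 1 = 0 := by simpa [hB', removeOne, hgx, hNs] using hbx
      have hne : (Sum.inl y : V ⊕ Fin N) ≠ g := by
        rw [← hgx]; simp [hxy.symm]
      have h2 : Ns y = 0 := by simpa [hB', removeOne, hne, hNs] using hby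
      omega
    · by_cases hgy : (Sum.inl y : V ⊕ Fin N) = g
      · have h1 : Ns y - 1 = 0 := by simpa [hB', removeOne, hgy, hNs] using hby
        have h2 : Ns x = 0 := by simpa [hB', removeOne, hgx, hNs] using hbx
        omega
      · have h1 : Ns x = 0 := by simpa [hB', removeOne, hgx, hNs] using hbx
        have h2 : Ns y = 0 := by simpa [hB', removeOne, hgy, hNs] using hby
        omega
  -- the support of Ns is independent, so the special agent holds ≤ K copies
  set S : Finset V := Finset.univ.filter (fun u => Ns u ≠ 0) with hS
  have hSind : ∀ x ∈ S, ∀ y ∈ S, ¬ G.Adj x y := by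
    intro x hx y hy hadj
    rw [hS, Finset.mem_filter] at hx hy
    have := hkey x y hadj
    omega
  have hsumNs : ∑ u : V, Ns u ≤ K := by
    have hNs1 : ∀ u, Ns u ≤ 1 := by
      intro u
      obtain ⟨y, hy⟩ := hiso u
      have := hkey u y hy
      omega
    calc ∑ u : V, Ns u = ∑ u ∈ S, Ns u := by
          rw [hS]
          exact (Finset.sum_filter_of_ne (fun u _ h => h)).symm
      _ ≤ ∑ u ∈ S, 1 := Finset.sum_le_sum (fun u _ => hNs1 u)
      _ = S.card := by simp
      _ ≤ K := hKmax S hSind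
  -- bound the edge agents' total value
  have hedgeTot : ∑ p : G.edgeFinset × Fin (2 * (Fintype.card V) + 1),
      bundleValue (graphVal G δ N (Sum.inl p)) (mult A (Sum.inl p)) ≤ δ * ((Fintype.card V) : ℝ) ^ 2 := by
    have h1 : ∀ p : G.edgeFinset × Fin (2 * (Fintype.card V) + 1),
        bundleValue (graphVal G δ N (Sum.inl p)) (mult A (Sum.inl p))
        ≤ ∑ u : V, (mult A (Sum.inl p) (Sum.inl u) : ℝ) * δ := by
      intro p
      rw [hedgeVal]
      refine Finset.sum_le_sum fun u _ => ?_
      refine mul_le_mul_of_nonneg_left ?_ (Nat.cast_nonneg _)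
      split
      · exact le_rfl
      · exact hδ0.le
    calc ∑ p : G.edgeFinset × Fin (2 * (Fintype.card V) + 1),
          bundleValue (graphVal G δ N (Sum.inl p)) (mult A (Sum.inl p))
        ≤ ∑ p : G.edgeFinset × Fin (2 * (Fintype.card V) + 1), ∑ u : V,
            (mult A (Sum.inl p) (Sum.inl u) : ℝ) * δ :=
          Finset.sum_le_sum fun p _ => h1 p
      _ = ∑ u : V, (∑ p : G.edgeFinset × Fin (2 * (Fintype.card V) + 1),
            (mult A (Sum.inl p) (Sum.inl u) : ℝ)) * δ := by
          rw [Finset.sum_comm]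
          exact Finset.sum_congr rfl fun u _ => (Finset.sum_mul _ _ _).symm
      _ ≤ ∑ u : V, ((Fintype.card V) : ℝ) * δ := by
          refine Finset.sum_le_sum fun u _ => ?_
          refine mul_le_mul_of_nonneg_right ?_ hδ0.le
          have htot := sum_mult A (Sum.inl u : V ⊕ Fin N)
          rw [Fintype.sum_sum_type] at htot
          have h2 : ∑ p : G.edgeFinset × Fin (2 * (Fintype.card V) + 1),
              mult A (Sum.inl p) (Sum.inl u) ≤ (Fintype.card V) := by omega
          exact_mod_cast h2
      _ = δ * ((Fintype.card V) : ℝ) ^ 2 := by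
          simp only [Finset.sum_const, Finset.card_univ, nsmul_eq_mul]
          ring
  -- conclude
  have hSW : SW (graphVal G δ N) A
      = (∑ p : G.edgeFinset × Fin (2 * (Fintype.card V) + 1),
          bundleValue (graphVal G δ N (Sum.inl p)) (mult A (Sum.inl p)))
        + bundleValue (graphVal G δ N (Sum.inr ())) (mult A (Sum.inr ())) := by
    unfold SW
    rw [Fintype.sum_sum_type]
    simp
  have hspec : bundleValue (graphVal G δ N (Sum.inr ())) (mult A (Sum.inr ())) ≤ (K : ℝ) := by
    rw [hspecialVal]
    exact_mod_cast hsumNs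
  rw [hSW]
  linarith
end

section
/- Let G = (V,E) be a finite graph with no isolated vertices, let 0 < δ < |V|^{−2}, and suppose G has an independent set of size K. Construct the repeated matching instance I(G) with T = |V| rounds and n = (2|V|+1)|E| + 1 agents and items as follows. The agents are 'edge agents' (e,i) for each e ∈ E and i ∈ {1,...,2|V|+1}, plus one 'special agent' s. The items are one 'node item' g_u for each u ∈ V, plus n − |V| 'dummy items'. Valuations: for every edge e = (x,y), every i, every u ∈ V, and every t ∈ {1,...,T}, v_{(e,i)}(g_u,t) = δ if u ∈ {x,y} and 0 otherwise; v_s(g_u,t) = 1 for every u ∈ V and t; all agents value every copy of every dummy item at 0. Then there exists an EF1 repeated matching of I(G) with social welfare at least K. -/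
open Finset

private lemma aux_round_lt (n V' X t₁ t₂ : ℕ) (hSn : V' * V' + 1 ≤ n)
    (hX : X < n) (ht₂ : t₂ < V') (hlt : t₁ < t₂)
    (h₁ : (X + (t₁ + 1) * V') % n < V') (h₂ : (X + (t₂ + 1) * V') % n < V') : False := by
  have hn0 : 0 < n := by omega
  have hP₁ : V' ≤ (t₁ + 1) * V' := Nat.le_mul_of_pos_left V' (by omega)
  have hP₂ : (t₂ + 1) * V' ≤ V' * V' := Nat.mul_le_mul_right V' (by omega)
  have hmono : (t₁ + 1) * V' + V' ≤ (t₂ + 1) * V' := by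
    calc (t₁ + 1) * V' + V' = (t₁ + 2) * V' := by ring
    _ ≤ (t₂ + 1) * V' := Nat.mul_le_mul_right V' (by omega)
  have e₁ := Nat.div_add_mod (X + (t₁ + 1) * V') n
  have e₂ := Nat.div_add_mod (X + (t₂ + 1) * V') n
  obtain ⟨P₁, hP₁def⟩ : ∃ P, P = (t₁ + 1) * V' := ⟨_, rfl⟩
  obtain ⟨P₂, hP₂def⟩ : ∃ P, P = (t₂ + 1) * V' := ⟨_, rfl⟩
  obtain ⟨S, hSdef⟩ : ∃ S, S = V' * V' := ⟨_, rfl⟩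
  rw [← hP₁def] at h₁ hP₁ hmono e₁
  rw [← hP₂def] at h₂ hP₂ hmono e₂
  rw [← hSdef] at hP₂ hSn
  have hq₁ : (X + P₁) / n < 2 := by rw [Nat.div_lt_iff_lt_mul hn0]; omega
  have hq₂ : (X + P₂) / n < 2 := by rw [Nat.div_lt_iff_lt_mul hn0]; omega
  obtain ⟨q₁, hq₁def⟩ : ∃ q, q = (X + P₁) / n := ⟨_, rfl⟩
  obtain ⟨q₂, hq₂def⟩ : ∃ q, q = (X + P₂) / n := ⟨_, rfl⟩
  obtain ⟨r₁, hr₁def⟩ : ∃ r, r = (X + P₁) % n := ⟨_, rfl⟩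
  obtain ⟨r₂, hr₂def⟩ : ∃ r, r = (X + P₂) % n := ⟨_, rfl⟩
  rw [← hq₁def] at e₁ hq₁
  rw [← hq₂def] at e₂ hq₂
  rw [← hr₁def] at e₁ h₁
  rw [← hr₂def] at e₂ h₂
  interval_cases q₁ <;> interval_cases q₂ <;> omega

private lemma aux_round (n V' X t₁ t₂ : ℕ) (hSn : V' * V' + 1 ≤ n)
    (hX : X < n) (ht₁ : t₁ < V') (ht₂ : t₂ < V')
    (h₁ : (X + (t₁ + 1) * V') % n < V') (h₂ : (X + (t₂ + 1) * V') % n < V') : t₁ = t₂ := by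
  rcases Nat.lt_trichotomy t₁ t₂ with h | h | h
  · exact (aux_round_lt n V' X t₁ t₂ hSn hX ht₂ h h₁ h₂).elim
  · exact h
  · exact (aux_round_lt n V' X t₂ t₁ hSn hX ht₁ h h₂ h₁).elim

/-- If a graph `G` with no isolated vertices has an independent set of size `K`,
then the instance `I(G)` (with `T = |V|` rounds and `n = (2|V|+1)|E| + 1`
agents/items) admits an EF1 repeated matching of social welfare at least `K`. -/
theorem stmt9 {V : Type*} [Fintype V] [DecidableEq V] (G : SimpleGraph V)
    [DecidableRel G.Adj]
    (hiso : ∀ x : V, ∃ y : V, G.Adj x y)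
    (δ : ℝ) (hδ0 : 0 < δ) (hδ1 : δ < 1 / (Fintype.card V : ℝ) ^ 2)
    (N : ℕ) (hN : N = (2 * Fintype.card V + 1) * G.edgeFinset.card + 1 - Fintype.card V)
    (K : ℕ)
    (hKex : ∃ s : Finset V, s.card = K ∧ ∀ x ∈ s, ∀ y ∈ s, ¬ G.Adj x y) :
    ∃ A : Fin (Fintype.card V) →
        ((G.edgeFinset × Fin (2 * Fintype.card V + 1)) ⊕ Unit) ≃ (V ⊕ Fin N),
      EF1 (graphVal G δ N) A ∧ (K : ℝ) ≤ SW (graphVal G δ N) A := by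
  classical
  obtain ⟨s, hsK, hs⟩ := hKex
  set V' := Fintype.card V with hV'
  set E' := G.edgeFinset.card with hE'
  by_cases hV0 : V' = 0
  · -- degenerate case: no vertices
    have hN1 : 0 < N := by rw [hN, hV0]; omega
    have hm : ∀ (f : Fin V' → ((G.edgeFinset × Fin (2 * V' + 1)) ⊕ Unit) ≃ (V ⊕ Fin N))
        (i' : (G.edgeFinset × Fin (2 * V' + 1)) ⊕ Unit) (g : V ⊕ Fin N), mult f i' g = 0 := by
      intro f i' g
      unfold mult
      rw [Finset.card_eq_zero]
      ext t
      exact absurd t.2 (by omega)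
    refine ⟨fun t => absurd t.2 (by omega), ?_, ?_⟩
    · intro i j
      refine ⟨Sum.inr ⟨0, hN1⟩, ?_⟩
      simp [bundleValue, hm, removeOne]
    · have hK0 : K = 0 := by
        have h := Finset.card_le_univ s
        rw [hsK, ← hV'] at h
        omega
      rw [hK0, Nat.cast_zero]
      unfold SW bundleValue
      apply Finset.sum_nonneg
      intro i _
      apply Finset.sum_nonneg
      intro g _
      apply Finset.sum_nonneg
      intro t _
      rcases i with ei | u <;> rcases g with u' | d <;> simp [graphVal] <;> positivity
  -- main case
  have hV1 : 1 ≤ V' := Nat.one_le_iff_ne_zero.mpr hV0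
  set M := (2 * V' + 1) * E' with hM
  set n := M + 1 with hn
  have hNn : N = n - V' := by rw [hN]
  -- handshake: V' ≤ 2 * E'
  have hhs : V' ≤ 2 * E' := by
    have h1 : ∀ x : V, 1 ≤ G.degree x := by
      intro x
      obtain ⟨y, hy⟩ := hiso x
      have := (G.degree_pos_iff_exists_adj x).mpr ⟨y, hy⟩
      omega
    calc V' = ∑ _x : V, 1 := by rw [Finset.sum_const, Finset.card_univ, smul_eq_mul, mul_one]
    _ ≤ ∑ x : V, G.degree x := Finset.sum_le_sum (fun x _ => h1 x)
    _ = 2 * E' := G.sum_degrees_eq_twice_card_edges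
  have hSn : V' * V' + 1 ≤ n := by
    have h2 : (2 * V' + 1) * V' ≤ (2 * V' + 1) * (2 * E') := Nat.mul_le_mul_left _ hhs
    have h3 : (2 * V' + 1) * (2 * E') = 2 * M := by rw [hM]; ring
    have h4 : (2 * V' + 1) * V' = 2 * (V' * V') + V' := by ring
    rw [h3, h4] at h2
    rw [hn]
    obtain ⟨S, hSdef⟩ : ∃ S, S = V' * V' := ⟨_, rfl⟩
    rw [← hSdef] at h2 ⊢
    omega
  have hVS : V' ≤ V' * V' := Nat.le_mul_of_pos_left V' hV1
  have hVn : V' < n := by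
    obtain ⟨S, hSdef⟩ : ∃ S, S = V' * V' := ⟨_, rfl⟩
    rw [← hSdef] at hSn hVS
    omega
  have hN1 : 0 < N := by omega
  have hKV : K ≤ V' := by
    have h := Finset.card_le_univ s
    rw [hsK, ← hV'] at h
    exact h
  haveI : NeZero n := ⟨by omega⟩
  have hKVc : K + (V' - K) = V' := by omega
  have hVNn : V' + N = n := by omega
  have h1Mn : 1 + M = n := by omega
  -- the agent-side equivalence, special agent ↦ 0
  let eEdge : (G.edgeFinset × Fin (2 * V' + 1)) ≃ Fin M :=
    Fintype.equivFinOfCardEq (by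
      rw [Fintype.card_prod, Fintype.card_coe, Fintype.card_fin, hM]; ring)
  let eU : Unit ≃ Fin 1 := Fintype.equivFinOfCardEq (by simp)
  let eA : ((G.edgeFinset × Fin (2 * V' + 1)) ⊕ Unit) ≃ Fin n :=
    (Equiv.sumComm _ _).trans ((eU.sumCongr eEdge).trans (finSumFinEquiv.trans (finCongr h1Mn)))
  have hsp : eA (Sum.inr ()) = 0 := by
    apply Fin.ext
    show ((finCongr h1Mn) (finSumFinEquiv (Sum.inl (eU ()))) : ℕ) = 0
    rw [finCongr_apply, Fin.coe_cast, finSumFinEquiv_apply_left, Fin.coe_castAdd]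
    omega
  -- the item-side equivalence: nodes ↦ [0, V'), independent set ↦ [0, K)
  let eVs : {x : V // x ∈ s} ≃ Fin K := Fintype.equivFinOfCardEq (by rw [Fintype.card_coe, hsK])
  let eVc : {x : V // ¬ x ∈ s} ≃ Fin (V' - K) :=
    Fintype.equivFinOfCardEq (by rw [Fintype.card_subtype_compl, Fintype.card_coe, hsK, ← hV'])
  let eV : V ≃ Fin V' :=
    (Equiv.sumCompl (· ∈ s)).symm.trans ((eVs.sumCongr eVc).trans (finSumFinEquiv.trans (finCongr hKVc)))
  let eI : (V ⊕ Fin N) ≃ Fin n :=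
    (eV.sumCongr (Equiv.refl (Fin N))).trans (finSumFinEquiv.trans (finCongr hVNn))
  have heIl : ∀ u : V, ((eI (Sum.inl u) : Fin n) : ℕ) = ((eV u : Fin V') : ℕ) := by
    intro u
    show ((finCongr hVNn) (finSumFinEquiv (Sum.inl (eV u))) : ℕ) = _
    rw [finCongr_apply, Fin.coe_cast, finSumFinEquiv_apply_left, Fin.coe_castAdd]
  have hP1 : ∀ u : V, ((eI (Sum.inl u) : Fin n) : ℕ) < V' := by
    intro u; rw [heIl u]; exact (eV u).2
  have hP3 : ∀ d : Fin N, V' ≤ ((eI (Sum.inr d) : Fin n) : ℕ) := by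
    intro d
    show V' ≤ ((finCongr hVNn) (finSumFinEquiv (Sum.inr d)) : ℕ)
    rw [finCongr_apply, Fin.coe_cast, finSumFinEquiv_apply_right, Fin.coe_natAdd]
    omega
  have hP2 : ∀ u : V, (((eI (Sum.inl u) : Fin n) : ℕ) < K ↔ u ∈ s) := by
    intro u
    rw [heIl u]
    by_cases hu : u ∈ s
    · have : eV u = (finCongr hKVc) (finSumFinEquiv (Sum.inl (eVs ⟨u, hu⟩))) := by
        show (finCongr hKVc) (finSumFinEquiv ((eVs.sumCongr eVc) ((Equiv.sumCompl (· ∈ s)).symm u))) = _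
        rw [Equiv.sumCompl_symm_apply_of_pos (p := (· ∈ s)) hu]
        rfl
      rw [this, finCongr_apply, Fin.coe_cast, finSumFinEquiv_apply_left, Fin.coe_castAdd]
      simp [hu, (eVs ⟨u, hu⟩).2]
    · have : eV u = (finCongr hKVc) (finSumFinEquiv (Sum.inr (eVc ⟨u, hu⟩))) := by
        show (finCongr hKVc) (finSumFinEquiv ((eVs.sumCongr eVc) ((Equiv.sumCompl (· ∈ s)).symm u))) = _
        rw [Equiv.sumCompl_symm_apply_of_neg (p := (· ∈ s)) hu]
        rfl
      rw [this, finCongr_apply, Fin.coe_cast, finSumFinEquiv_apply_right, Fin.coe_natAdd]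
      simp [hu]
  -- the permutations
  have haux : ∀ t : Fin V', ((t : ℕ) + 1) * V' < n := by
    intro t
    have h1 : ((t : ℕ) + 1) * V' ≤ V' * V' := Nat.mul_le_mul_right V' (by omega)
    obtain ⟨P, hP⟩ : ∃ P, P = ((t : ℕ) + 1) * V' := ⟨_, rfl⟩
    obtain ⟨S, hSdef⟩ : ∃ S, S = V' * V' := ⟨_, rfl⟩
    rw [← hP, ← hSdef] at h1
    rw [← hP]
    rw [← hSdef] at hSn
    omega
  set a : Fin V' → Fin n := fun t => ⟨((t : ℕ) + 1) * V', haux t⟩ with ha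
  set σf : Fin V' → Fin n := fun t => if (t : ℕ) < K then ⟨(t : ℕ), by omega⟩ else a t with hσf
  set π : Fin V' → Equiv.Perm (Fin n) :=
    fun t => (Equiv.addRight (a t)).trans (Equiv.swap (a t) (σf t)) with hπ
  have haval : ∀ t : Fin V', ((a t : Fin n) : ℕ) = ((t : ℕ) + 1) * V' := fun t => rfl
  have haV : ∀ t : Fin V', V' ≤ ((a t : Fin n) : ℕ) := by
    intro t
    rw [haval t]
    exact Nat.le_mul_of_pos_left V' (by omega)
  have hσlt : ∀ t : Fin V', ((σf t : Fin n) : ℕ) < V' ↔ (t : ℕ) < K := by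
    intro t
    rw [hσf]
    by_cases h : (t : ℕ) < K
    · simp only [if_pos h]
      constructor
      · intro _; exact h
      · intro _; show (t : ℕ) < V'; exact t.2
    · simp only [if_neg h]
      constructor
      · intro hc; exact absurd hc (not_lt.mpr (haV t))
      · intro hc; exact absurd hc h
  have hσval : ∀ t : Fin V', (t : ℕ) < K → ((σf t : Fin n) : ℕ) = (t : ℕ) := by
    intro t h
    rw [hσf]
    simp only [if_pos h]
  -- the special agent gets σf t in round t
  have hQ0 : ∀ t : Fin V', π t 0 = σf t := by
    intro t
    rw [hπ]
    show (Equiv.swap (a t) (σf t)) ((0 : Fin n) + a t) = σf t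
    rw [zero_add, Equiv.swap_apply_left]
  -- an edge agent's item, if a node item, comes from pure rotation
  have hQ1 : ∀ (t : Fin V') (x : Fin n), x ≠ 0 → ((π t x : Fin n) : ℕ) < V' →
      ((x : ℕ) + ((t : ℕ) + 1) * V') % n < V' := by
    intro t x hx hlt
    rw [hπ] at hlt
    have hπx : π t x = Equiv.swap (a t) (σf t) (x + a t) := by rw [hπ]; rfl
    by_cases h1 : x + a t = a t
    · exact absurd (by
        have : x + a t = 0 + a t := by rw [zero_add]; exact h1
        exact add_right_cancel this) hx
    by_cases h2 : x + a t = σf t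
    · exfalso
      have : (π t x : Fin n) = a t := by rw [hπx, h2, Equiv.swap_apply_right]
      rw [hπ] at this
      rw [this] at hlt
      exact absurd hlt (not_lt.mpr (haV t))
    · have : (π t x : Fin n) = x + a t := by rw [hπx, Equiv.swap_apply_of_ne_of_ne h1 h2]
      rw [hπ] at this
      rw [this, Fin.add_def] at hlt
      exact hlt
  -- each edge agent receives a node item in at most one round
  have hkey : ∀ x : Fin n, x ≠ 0 →
      (Finset.univ.filter fun t : Fin V' => ((π t x : Fin n) : ℕ) < V').card ≤ 1 := by
    intro x hx
    rw [Finset.card_le_one]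
    intro t₁ h₁ t₂ h₂
    simp only [Finset.mem_filter, Finset.mem_univ, true_and] at h₁ h₂
    exact Fin.ext (aux_round n V' (x : ℕ) (t₁ : ℕ) (t₂ : ℕ) hSn x.2 t₁.2 t₂.2
      (hQ1 t₁ x hx h₁) (hQ1 t₂ x hx h₂))
  -- the repeated matching
  set Af : Fin V' → ((G.edgeFinset × Fin (2 * V' + 1)) ⊕ Unit) ≃ (V ⊕ Fin N) :=
    fun t => eA.trans ((π t).trans eI.symm) with hAf
  have hmult : ∀ i g, mult Af i g
      = (Finset.univ.filter fun t : Fin V' => π t (eA i) = eI g).card := by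
    intro i g
    unfold mult
    congr 1
    ext t
    simp only [Finset.mem_filter, Finset.mem_univ, true_and, hAf, Equiv.trans_apply]
    rw [Equiv.symm_apply_eq]
  -- value machinery
  have hconst : ∀ i g t, graphVal G δ N i g t = graphVal G δ N i g 1 := by
    rintro (ei | u) (w | d) t <;> rfl
  have hVF : ∀ i B, bundleValue (graphVal G δ N i) B
      = ∑ g : V ⊕ Fin N, (B g : ℝ) * graphVal G δ N i g 1 := by
    intro i B
    unfold bundleValue
    refine Finset.sum_congr rfl fun g _ => ?_
    rw [Finset.sum_congr rfl fun t _ => hconst i g (t + 1), Finset.sum_const,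
      Finset.card_range, nsmul_eq_mul]
  have hnn : ∀ i g, 0 ≤ graphVal G δ N i g 1 := by
    rintro (ei | u) (w | d) <;> simp [graphVal] <;> positivity
  have hdum : ∀ i d t, graphVal G δ N i (Sum.inr d) t = 0 := by
    rintro (ei | u) d t <;> rfl
  have hbnn : ∀ i B, 0 ≤ bundleValue (graphVal G δ N i) B := by
    intro i B
    rw [hVF]
    exact Finset.sum_nonneg fun g _ => mul_nonneg (Nat.cast_nonneg _) (hnn i g)
  have hrmono : ∀ i B g, bundleValue (graphVal G δ N i) (removeOne B g)
      ≤ bundleValue (graphVal G δ N i) B := by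
    intro i B g
    rw [hVF, hVF]
    refine Finset.sum_le_sum fun g' _ => ?_
    refine mul_le_mul_of_nonneg_right ?_ (hnn i g')
    have : removeOne B g g' ≤ B g' := by
      unfold removeOne
      split_ifs <;> omega
    exact_mod_cast this
  -- special agent's bundle
  have hspb : ∀ u : V, mult Af (Sum.inr ()) (Sum.inl u) = if u ∈ s then 1 else 0 := by
    intro u
    rw [hmult, hsp]
    have hcond : ∀ t : Fin V', (π t 0 = eI (Sum.inl u)) ↔ σf t = eI (Sum.inl u) := by
      intro t; rw [hQ0]
    simp only [hcond]
    by_cases hu : u ∈ s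
    · rw [if_pos hu]
      have hpK : ((eI (Sum.inl u) : Fin n) : ℕ) < K := (hP2 u).mpr hu
      have hset : (Finset.univ.filter fun t : Fin V' => σf t = eI (Sum.inl u))
          = {(⟨((eI (Sum.inl u) : Fin n) : ℕ), by omega⟩ : Fin V')} := by
        ext t
        simp only [Finset.mem_filter, Finset.mem_univ, true_and, Finset.mem_singleton]
        constructor
        · intro ht
          apply Fin.ext
          show (t : ℕ) = _
          by_cases htK : (t : ℕ) < K
          · rw [← hσval t htK, ht]
          · exfalso
            have h1 : V' ≤ ((σf t : Fin n) : ℕ) := by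
              have := (hσlt t).not
              push_neg at this
              exact this.mpr (by omega)
            rw [ht] at h1
            exact absurd h1 (not_le.mpr (hP1 u))
        · rintro rfl
          have : ((⟨((eI (Sum.inl u) : Fin n) : ℕ), by omega⟩ : Fin V') : ℕ) < K := hpK
          apply Fin.ext
          rw [hσval _ this]
      rw [hset, Finset.card_singleton]
    · rw [if_neg hu]
      rw [Finset.card_eq_zero, Finset.filter_eq_empty_iff]
      intro t _
      intro ht
      have h1 : K ≤ ((eI (Sum.inl u) : Fin n) : ℕ) := by
        have := (hP2 u).not.mpr hu
        omega
      by_cases htK : (t : ℕ) < K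
      · have := hσval t htK
        rw [ht] at this
        omega
      · have h2 : V' ≤ ((σf t : Fin n) : ℕ) := by
          have := (hσlt t).not
          push_neg at this
          exact this.mpr (by omega)
        rw [ht] at h2
        exact absurd h2 (not_le.mpr (hP1 u))
  -- special agent's bundle value = K
  have hsv : bundleValue (graphVal G δ N (Sum.inr ())) (mult Af (Sum.inr ())) = K := by
    rw [hVF, Fintype.sum_sum_type]
    have h1 : ∀ u : V, ((mult Af (Sum.inr ()) (Sum.inl u) : ℝ))
        * graphVal G δ N (Sum.inr ()) (Sum.inl u) 1 = if u ∈ s then (1 : ℝ) else 0 := by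
      intro u
      rw [hspb u]
      show _ * (1 : ℝ) = _
      split_ifs <;> norm_num
    have h2 : ∀ d : Fin N, ((mult Af (Sum.inr ()) (Sum.inr d) : ℝ))
        * graphVal G δ N (Sum.inr ()) (Sum.inr d) 1 = 0 := by
      intro d; rw [hdum (Sum.inr ()) d 1, mul_zero]
    rw [Finset.sum_congr rfl fun u _ => h1 u]
    rw [Finset.sum_congr rfl fun d _ => h2 d]
    rw [Finset.sum_ite_mem, Finset.univ_inter, Finset.sum_const, hsK, nsmul_eq_mul, mul_one,
      Finset.sum_const, smul_zero, add_zero]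
  -- fiber counting
  have hfib : ∀ y : Fin n, (∑ u : V, if eI (Sum.inl u) = y then 1 else 0)
      = if (y : ℕ) < V' then 1 else 0 := by
    intro y
    rcases h : eI.symm y with u₀ | d
    · have hy : eI (Sum.inl u₀) = y := by rw [← h, Equiv.apply_symm_apply]
      rw [if_pos (by rw [← hy]; exact hP1 u₀)]
      have heq : ∀ u : V, (eI (Sum.inl u) = y) = (u = u₀) := by
        intro u
        apply propext
        constructor
        · intro hu
          exact Sum.inl_injective (eI.injective (hu.trans hy.symm))
        · rintro rfl; exact hy
      simp only [heq]
      rw [Finset.sum_ite_eq' Finset.univ u₀ (fun _ => 1), if_pos (Finset.mem_univ u₀)]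
    · have hy : eI (Sum.inr d) = y := by rw [← h, Equiv.apply_symm_apply]
      rw [if_neg (by rw [← hy]; exact not_lt.mpr (hP3 d))]
      refine Finset.sum_eq_zero fun u _ => ?_
      rw [if_neg (fun hu => Sum.inl_ne_inr (eI.injective (hu.trans hy.symm)))]
  -- each edge agent holds at most one node-item copy in total
  have hkey2 : ∀ j, eA j ≠ 0 → (∑ u : V, mult Af j (Sum.inl u)) ≤ 1 := by
    intro j hj
    have h1 : (∑ u : V, mult Af j (Sum.inl u))
        = ∑ u : V, ∑ t : Fin V', if π t (eA j) = eI (Sum.inl u) then 1 else 0 := by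
      refine Finset.sum_congr rfl fun u _ => ?_
      rw [hmult, Finset.card_filter]
    rw [h1, Finset.sum_comm]
    have h2 : ∀ t : Fin V', (∑ u : V, if π t (eA j) = eI (Sum.inl u) then 1 else 0)
        = if ((π t (eA j) : Fin n) : ℕ) < V' then 1 else 0 := by
      intro t
      rw [← hfib (π t (eA j))]
      exact Finset.sum_congr rfl fun u _ => if_congr eq_comm rfl rfl
    rw [Finset.sum_congr rfl fun t _ => h2 t, ← Finset.card_filter]
    exact hkey (eA j) hj
  -- removing one item empties any edge agent's node holdings
  have hzero : ∀ (i : (G.edgeFinset × Fin (2 * V' + 1)) ⊕ Unit)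
      (j : (G.edgeFinset × Fin (2 * V' + 1)) ⊕ Unit), eA j ≠ 0 →
      ∃ g, bundleValue (graphVal G δ N i) (removeOne (mult Af j) g) ≤ 0 := by
    intro i j hj
    have htot := hkey2 j hj
    by_cases hc : ∀ u : V, mult Af j (Sum.inl u) = 0
    · refine ⟨Sum.inr ⟨0, hN1⟩, ?_⟩
      rw [hVF, Fintype.sum_sum_type]
      have h1 : ∀ u : V, ((removeOne (mult Af j) (Sum.inr ⟨0, hN1⟩) (Sum.inl u) : ℝ))
          * graphVal G δ N i (Sum.inl u) 1 = 0 := by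
        intro u
        have hz : removeOne (mult Af j) (Sum.inr ⟨0, hN1⟩) (Sum.inl u) = 0 := by
          unfold removeOne; rw [if_neg (by simp)]; exact hc u
        rw [hz]; norm_num
      have h2 : ∀ d : Fin N, ((removeOne (mult Af j) (Sum.inr ⟨0, hN1⟩) (Sum.inr d) : ℝ))
          * graphVal G δ N i (Sum.inr d) 1 = 0 := by
        intro d; rw [hdum i d 1, mul_zero]
      rw [Finset.sum_congr rfl fun u _ => h1 u]
      rw [Finset.sum_congr rfl fun d _ => h2 d]
      simp
    · push_neg at hc
      obtain ⟨u₀, hu₀⟩ := hc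
      refine ⟨Sum.inl u₀, ?_⟩
      rw [hVF, Fintype.sum_sum_type]
      have h1 : ∀ u : V, ((removeOne (mult Af j) (Sum.inl u₀) (Sum.inl u) : ℝ))
          * graphVal G δ N i (Sum.inl u) 1 = 0 := by
        intro u
        have hz : removeOne (mult Af j) (Sum.inl u₀) (Sum.inl u) = 0 := by
          unfold removeOne
          by_cases huu : u = u₀
          · rw [if_pos (by rw [huu])]
            have hA : mult Af j (Sum.inl u₀) ≤ ∑ u : V, mult Af j (Sum.inl u) :=
              Finset.single_le_sum (f := fun u : V => mult Af j (Sum.inl u))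
                (fun _ _ => Nat.zero_le _) (Finset.mem_univ u₀)
            have hle : mult Af j (Sum.inl u) ≤ 1 := by rw [huu]; omega
            omega
          · rw [if_neg (by simp [huu])]
            have hpair : mult Af j (Sum.inl u) + mult Af j (Sum.inl u₀)
                ≤ ∑ u : V, mult Af j (Sum.inl u) := by
              rw [← Finset.sum_pair (f := fun u : V => mult Af j (Sum.inl u)) huu]
              exact Finset.sum_le_sum_of_subset (Finset.subset_univ _)
            omega
        rw [hz]; norm_num
      have h2 : ∀ d : Fin N, ((removeOne (mult Af j) (Sum.inl u₀) (Sum.inr d) : ℝ))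
          * graphVal G δ N i (Sum.inr d) 1 = 0 := by
        intro d; rw [hdum i d 1, mul_zero]
      rw [Finset.sum_congr rfl fun u _ => h1 u]
      rw [Finset.sum_congr rfl fun d _ => h2 d]
      simp
  -- edge agents do not envy the special agent (independence)
  have hind : ∀ (p : G.edgeFinset × Fin (2 * V' + 1)),
      ∃ g, bundleValue (graphVal G δ N (Sum.inl p)) (removeOne (mult Af (Sum.inr ())) g) ≤ 0 := by
    intro p
    have hadj : ∀ u u' : V, u ∈ (p.1 : Sym2 V) → u' ∈ (p.1 : Sym2 V) → u ≠ u' → G.Adj u u' := by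
      intro u u' hu hu' hne
      have he : (p.1 : Sym2 V) = s(u, u') := (Sym2.mem_and_mem_iff hne).mp ⟨hu, hu'⟩
      have hmem : (p.1 : Sym2 V) ∈ G.edgeFinset := p.1.2
      rw [SimpleGraph.mem_edgeFinset, he, SimpleGraph.mem_edgeSet] at hmem
      exact hmem
    have hone : ∀ u ∈ s, u ∈ (p.1 : Sym2 V) → ∀ u' ∈ s, u' ∈ (p.1 : Sym2 V) → u = u' := by
      intro u hus hue u' hu's hu'e
      by_contra hne
      exact hs u hus u' hu's (hadj u u' hue hu'e hne)
    have h2 : ∀ (g : V ⊕ Fin N) (d : Fin N),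
        ((removeOne (mult Af (Sum.inr ())) g (Sum.inr d) : ℝ))
        * graphVal G δ N (Sum.inl p) (Sum.inr d) 1 = 0 := by
      intro g d; rw [hdum (Sum.inl p) d 1, mul_zero]
    by_cases hex : ∃ u, u ∈ s ∧ u ∈ (p.1 : Sym2 V)
    · obtain ⟨u₀, hu₀s, hu₀e⟩ := hex
      refine ⟨Sum.inl u₀, ?_⟩
      rw [hVF, Fintype.sum_sum_type]
      have h1 : ∀ u : V, ((removeOne (mult Af (Sum.inr ())) (Sum.inl u₀) (Sum.inl u) : ℝ))
          * graphVal G δ N (Sum.inl p) (Sum.inl u) 1 = 0 := by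
        intro u
        by_cases huu : u = u₀
        · subst huu
          have hz : removeOne (mult Af (Sum.inr ())) (Sum.inl u) (Sum.inl u) = 0 := by
            unfold removeOne
            rw [if_pos rfl, hspb u, if_pos hu₀s]
          rw [hz]; norm_num
        · have hz : removeOne (mult Af (Sum.inr ())) (Sum.inl u₀) (Sum.inl u)
              = mult Af (Sum.inr ()) (Sum.inl u) := by
            unfold removeOne
            rw [if_neg (by simp [huu])]
          rw [hz, hspb u]
          by_cases hus : u ∈ s
          · rw [if_pos hus, Nat.cast_one, one_mul]
            show (if u ∈ (p.1 : Sym2 V) then δ else 0) = 0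
            rw [if_neg]
            intro hue
            exact huu (hone u hus hue u₀ hu₀s hu₀e)
          · rw [if_neg hus]; norm_num
      rw [Finset.sum_congr rfl fun u _ => h1 u]
      rw [Finset.sum_congr rfl fun d _ => h2 (Sum.inl u₀) d]
      simp
    · push_neg at hex
      refine ⟨Sum.inr ⟨0, hN1⟩, ?_⟩
      rw [hVF, Fintype.sum_sum_type]
      have h1 : ∀ u : V, ((removeOne (mult Af (Sum.inr ())) (Sum.inr ⟨0, hN1⟩) (Sum.inl u) : ℝ))
          * graphVal G δ N (Sum.inl p) (Sum.inl u) 1 = 0 := by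
        intro u
        have hz : removeOne (mult Af (Sum.inr ())) (Sum.inr ⟨0, hN1⟩) (Sum.inl u)
            = mult Af (Sum.inr ()) (Sum.inl u) := by
          unfold removeOne; rw [if_neg (by simp)]
        rw [hz, hspb u]
        by_cases hus : u ∈ s
        · rw [if_pos hus, Nat.cast_one, one_mul]
          show (if u ∈ (p.1 : Sym2 V) then δ else 0) = 0
          rw [if_neg (hex u hus)]
        · rw [if_neg hus]; norm_num
      rw [Finset.sum_congr rfl fun u _ => h1 u]
      rw [Finset.sum_congr rfl fun d _ => h2 (Sum.inr ⟨0, hN1⟩) d]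
      simp
  -- conclusion
  refine ⟨Af, ?_, ?_⟩
  · unfold EF1
    intro i j
    by_cases hij : i = j
    · subst hij
      exact ⟨Sum.inr ⟨0, hN1⟩, hrmono i (mult Af i) _⟩
    · rcases j with p | uj
      · have hne : eA (Sum.inl p) ≠ 0 := by
          intro h
          have := eA.injective (h.trans hsp.symm)
          simp at this
        obtain ⟨g, hg⟩ := hzero i (Sum.inl p) hne
        exact ⟨g, le_trans hg (hbnn i _)⟩
      · cases uj
        rcases i with q | ui
        · obtain ⟨g, hg⟩ := hind q
          exact ⟨g, le_trans hg (hbnn _ _)⟩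
        · cases ui
          exact absurd rfl hij
  · unfold SW
    have h := Finset.single_le_sum
      (f := fun i => bundleValue (graphVal G δ N i) (mult Af i))
      (fun i _ => hbnn i _) (Finset.mem_univ (Sum.inr ()))
    exact le_trans (le_of_eq hsv.symm) h
end

section
/- Let I be a repeated matching instance with n agents/items and T rounds in which all agents have the same valuation function v (identical valuations), with no sign restriction on v (mixed items). Then there exists a repeated matching of I that is swapEF. -/
open Finset

/-- Replace one copy of `gout` by one copy of `gin` in the bundle `B`. -/
def swapBundle {β : Type*} [DecidableEq β] (B : β → ℕ) (gout gin : β) : β → ℕ :=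
  fun g => (B g + if g = gin then 1 else 0) - (if g = gout then 1 else 0)

/-- `swapEF`: for every pair of agents `i, j`, either `i` does not envy `j`, or the
envy disappears after swapping a copy of some item of `i` with a copy of some item
of `j`. -/
def swapEF {α β : Type*} [Fintype β] [DecidableEq β] {T : ℕ}
    (v : α → β → ℕ → ℝ) (A : Fin T → α ≃ β) : Prop :=
  ∀ i j : α,
    bundleValue (v i) (mult A i) ≥ bundleValue (v i) (mult A j) ∨
    ∃ gi gj : β, 1 ≤ mult A i gi ∧ 1 ≤ mult A j gj ∧
      bundleValue (v i) (swapBundle (mult A i) gi gj) ≥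
        bundleValue (v i) (swapBundle (mult A j) gj gi)

lemma count_mod_s12 (q n c : ℕ) (hc : c < n) :
    ((Finset.range (q * n)).filter (fun t => t % n = c)).card = q := by
  induction q with
  | zero => simp
  | succ q ih =>
    have h : (q+1) * n = q * n + n := by ring
    rw [h, Finset.range_add, Finset.filter_union, Finset.card_union_of_disjoint]
    · rw [ih]
      have : ((Finset.range n).map (addLeftEmbedding (q*n))).filter (fun t => t % n = c)
          = {q * n + c} := by
        ext t
        simp only [Finset.mem_filter, Finset.mem_map, Finset.mem_range, Finset.mem_singleton,
          addLeftEmbedding_apply]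
        constructor
        · rintro ⟨⟨s, hs, rfl⟩, hmod⟩
          have : (q * n + s) % n = s := by
            rw [mul_comm q n, Nat.mul_add_mod, Nat.mod_eq_of_lt hs]
          omega
        · rintro rfl
          refine ⟨⟨c, hc, rfl⟩, ?_⟩
          rw [mul_comm q n, Nat.mul_add_mod, Nat.mod_eq_of_lt hc]
      rw [this]; simp
    · exact Finset.disjoint_filter_filter (Finset.disjoint_left.mpr (by
        intro a ha hb
        simp only [Finset.mem_range] at ha
        simp only [Finset.mem_map, addLeftEmbedding_apply] at hb
        obtain ⟨s, _, rfl⟩ := hb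
        omega))


lemma decomp (n : ℕ) (r : ℕ) (S : Fin n → Finset (Fin n))
    (hcard : ∀ i, (S i).card = r)
    (hcov : ∀ g, (univ.filter fun i => g ∈ S i).card = r) :
    ∃ σ : Fin r → (Fin n ≃ Fin n),
      ∀ i g, (univ.filter fun k : Fin r => σ k i = g).card
        = if g ∈ S i then 1 else 0 := by
  induction r generalizing S with
  | zero =>
    refine ⟨fun k => k.elim0, ?_⟩
    intro i g
    have hS : S i = ∅ := Finset.card_eq_zero.mp (hcard i)
    simp [hS]
  | succ r ih =>
    have hall : ∀ s : Finset (Fin n), s.card ≤ (s.biUnion S).card := by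
      intro s
      have key : s.card * (r+1) ≤ (s.biUnion S).card * (r+1) := by
        have h1 : s.card * (r+1) = ∑ i ∈ s, (S i).card := by
          rw [Finset.sum_congr rfl (fun i _ => hcard i), Finset.sum_const, smul_eq_mul]
        have hsub : ∀ i ∈ s, S i ⊆ s.biUnion S := fun i hi =>
          Finset.subset_biUnion_of_mem S hi
        have h2 : ∑ i ∈ s, (S i).card
            = ∑ i ∈ s, ∑ g ∈ s.biUnion S, (if g ∈ S i then 1 else 0) := by
          refine Finset.sum_congr rfl fun i hi => ?_
          rw [← Finset.card_filter]
          congr 1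
          rw [Finset.filter_mem_eq_inter, Finset.inter_eq_right.mpr (hsub i hi)]
        have h3 : ∑ i ∈ s, ∑ g ∈ s.biUnion S, (if g ∈ S i then 1 else 0)
            = ∑ g ∈ s.biUnion S, (s.filter fun i => g ∈ S i).card := by
          rw [Finset.sum_comm]
          refine Finset.sum_congr rfl fun g _ => ?_
          rw [Finset.card_filter]
        have h4 : ∑ g ∈ s.biUnion S, (s.filter fun i => g ∈ S i).card
            ≤ ∑ g ∈ s.biUnion S, (r+1) := by
          refine Finset.sum_le_sum fun g _ => ?_
          rw [← hcov g]
          exact Finset.card_le_card (Finset.filter_subset_filter _ (Finset.subset_univ s))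
        rw [h1, h2, h3]
        simpa using h4
      exact Nat.le_of_mul_le_mul_right key (Nat.succ_pos r)
    obtain ⟨f, hfinj, hf⟩ := (Finset.all_card_le_biUnion_card_iff_exists_injective S).mp hall
    let e : Fin n ≃ Fin n := Equiv.ofBijective f (Finite.injective_iff_bijective.mp hfinj)
    have he : ∀ i, e i = f i := fun i => rfl
    set S' : Fin n → Finset (Fin n) := fun i => (S i).erase (f i) with hS'
    have hcard' : ∀ i, (S' i).card = r := by
      intro i
      rw [hS']
      rw [Finset.card_erase_of_mem (hf i), hcard i]
      rfl
    have hcov' : ∀ g, (univ.filter fun i => g ∈ S' i).card = r := by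
      intro g
      have hset : (univ.filter fun i => g ∈ S' i)
          = (univ.filter fun i => g ∈ S i).erase (e.symm g) := by
        ext i
        simp only [hS', Finset.mem_filter, Finset.mem_erase, Finset.mem_univ, true_and]
        constructor
        · rintro ⟨hne, hmem⟩
          refine ⟨?_, hmem⟩
          intro hEq
          exact hne (by rw [hEq, ← he]; exact (Equiv.apply_symm_apply e g).symm)
        · rintro ⟨hne, hmem⟩
          refine ⟨?_, hmem⟩
          intro hEq
          exact hne (by rw [hEq, ← he]; exact (Equiv.symm_apply_apply e i).symm)
      rw [hset, Finset.card_erase_of_mem, hcov g]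
      · rfl
      · simp only [Finset.mem_filter, Finset.mem_univ, true_and]
        have hg : f (e.symm g) = g := by
          rw [← he, Equiv.apply_symm_apply]
        have := hf (e.symm g)
        rwa [hg] at this
    obtain ⟨σ', hσ'⟩ := ih S' hcard' hcov'
    refine ⟨Fin.cons e σ', ?_⟩
    intro i g
    rw [Finset.card_filter, Fin.sum_univ_succ]
    simp only [Fin.cons_zero, Fin.cons_succ]
    rw [← Finset.card_filter, hσ' i g]
    by_cases hgf : g = f i
    · have h1 : e i = g := by rw [he, hgf]
      have h2 : g ∉ S' i := by simp [hS', hgf]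
      have h3 : g ∈ S i := hgf ▸ hf i
      simp [h1, h2, h3]
    · have h1 : ¬ (e i = g) := by rw [he]; exact fun h => hgf h.symm
      have h2 : g ∈ S' i ↔ g ∈ S i := by
        simp [hS', Finset.mem_erase, hgf]
      simp only [h1, if_neg h1, if_false]
      by_cases hgS : g ∈ S i
      · simp [h2.mpr hgS, hgS]
      · have h4 : g ∉ S' i := fun h => hgS (h2.mp h)
        simp [hgS, h4]


section
variable (n : ℕ) [NeZero n]

noncomputable def piFun (T : ℕ) (σ : Fin (T % n) → (Fin n ≃ Fin n)) :
    ℕ → (Fin n ≃ Fin n) := fun m =>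
  if m < (T / n) * n then
    Equiv.addRight (⟨m % n, Nat.mod_lt _ (Nat.pos_of_ne_zero (NeZero.ne n))⟩ : Fin n)
  else if h2 : m - (T / n) * n < T % n then σ ⟨m - (T / n) * n, h2⟩
  else Equiv.refl _

noncomputable def buildA (T : ℕ) (σ : Fin (T % n) → (Fin n ≃ Fin n)) :
    Fin T → (Fin n ≃ Fin n) := fun t => piFun n T σ t.val

lemma mult_buildA (T : ℕ) (S : Fin n → Finset (Fin n))
    (σ : Fin (T % n) → (Fin n ≃ Fin n))
    (hσ : ∀ i g, (univ.filter fun k : Fin (T % n) => σ k i = g).card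
        = if g ∈ S i then 1 else 0)
    (i g : Fin n) :
    mult (buildA n T σ) i g = T / n + (if g ∈ S i then 1 else 0) := by
  classical
  have hT : (T / n) * n + T % n = T := by rw [mul_comm]; exact Nat.div_add_mod T n
  rw [mult, Finset.card_filter]
  have hstep : (∑ t : Fin T, if (buildA n T σ t) i = g then 1 else 0)
      = ∑ m ∈ Finset.range T, (fun m => if (piFun n T σ m) i = g then 1 else 0) m :=
    Fin.sum_univ_eq_sum_range (fun m => if (piFun n T σ m) i = g then 1 else 0) T
  rw [hstep,
    show Finset.range T = Finset.range ((T/n) * n + (T % n)) from by rw [hT],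
    Finset.range_add, Finset.sum_union, Finset.sum_map]
  · congr 1
    · -- rotation part: = T / n
      have hrw : ∀ m ∈ Finset.range ((T/n) * n),
          (if (piFun n T σ m) i = g then 1 else 0)
            = (if m % n = (g - i).val then 1 else 0) := by
        intro m hm
        rw [Finset.mem_range] at hm
        have hunf : piFun n T σ m
            = Equiv.addRight (⟨m % n, Nat.mod_lt _ (Nat.pos_of_ne_zero (NeZero.ne n))⟩ : Fin n) := by
          unfold piFun
          rw [if_pos hm]
        rw [hunf]
        have hiff : ((Equiv.addRight (⟨m % n, Nat.mod_lt _ (Nat.pos_of_ne_zero (NeZero.ne n))⟩ : Fin n)) i = g)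
            ↔ (m % n = (g - i).val) := by
          simp only [Equiv.coe_addRight]
          rw [add_comm, ← eq_sub_iff_add_eq, Fin.ext_iff]
        rw [if_congr hiff rfl rfl]
      rw [Finset.sum_congr rfl hrw, ← Finset.card_filter,
        count_mod_s12 _ _ _ ((g - i).isLt)]
    · -- sigma part
      have hrw2 : ∀ x ∈ Finset.range (T % n),
          ((fun m => if (piFun n T σ m) i = g then 1 else 0) ((addLeftEmbedding ((T/n) * n)) x))
            = (fun m => if (piFun n T σ ((T/n) * n + m)) i = g then 1 else 0) x := by
        intro x hx
        simp only [addLeftEmbedding_apply]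
      rw [Finset.sum_congr rfl hrw2,
        ← Fin.sum_univ_eq_sum_range
          (fun m => if (piFun n T σ (((T/n) * n) + m)) i = g then 1 else 0) (T % n)]
      have h3 : ∀ k : Fin (T % n),
          (if (piFun n T σ (((T/n) * n) + k.val)) i = g then 1 else 0)
            = (if (σ k) i = g then 1 else 0) := by
        intro k
        have hpi : piFun n T σ ((T/n) * n + k.val) = σ k := by
          unfold piFun
          have h1 : ¬ ((T/n) * n + k.val < (T/n) * n) := by omega
          rw [if_neg h1]
          have h2 : ((T/n) * n + k.val - (T/n) * n) = k.val := by omega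
          simp only [h2]
          rw [dif_pos k.isLt]
        rw [hpi]
      rw [Finset.sum_congr rfl (fun k _ => h3 k), ← Finset.card_filter, hσ i g]
  · refine Finset.disjoint_left.mpr ?_
    intro a ha hb
    rw [Finset.mem_range] at ha
    simp only [Finset.mem_map, addLeftEmbedding_apply] at hb
    obtain ⟨s, _, rfl⟩ := hb
    omega

end

section
variable {n : ℕ}

lemma bundleValue_family (v : Fin n → ℕ → ℝ) (q : ℕ) (s : Finset (Fin n)) :
    bundleValue v (fun g => q + if g ∈ s then 1 else 0)
      = (∑ g : Fin n, ∑ t ∈ Finset.range q, v g (t+1)) + ∑ g ∈ s, v g (q+1) := by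
  unfold bundleValue
  have hg : ∀ g : Fin n,
      (∑ t ∈ Finset.range (q + if g ∈ s then 1 else 0), v g (t+1))
        = (∑ t ∈ Finset.range q, v g (t+1)) + (if g ∈ s then v g (q+1) else 0) := by
    intro g
    by_cases h : g ∈ s
    · simp only [h, if_true]
      rw [Finset.sum_range_succ]
    · simp [h]
  rw [Finset.sum_congr rfl (fun g _ => hg g), Finset.sum_add_distrib]
  congr 1
  rw [Finset.sum_ite_mem, Finset.univ_inter]

lemma swap_family (q : ℕ) (s : Finset (Fin n)) (a b : Fin n)
    (ha : a ∈ s) (hb : b ∉ s) (B : Fin n → ℕ)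
    (hB : ∀ g, B g = q + if g ∈ s then 1 else 0) :
    swapBundle B a b = fun g => q + if g ∈ insert b (s.erase a) then 1 else 0 := by
  have hab : a ≠ b := fun h => hb (h ▸ ha)
  funext g
  unfold swapBundle
  rw [hB g]
  by_cases hga : g = a
  · subst hga
    simp [ha, hab, Finset.mem_insert, Finset.mem_erase]
  · by_cases hgb : g = b
    · subst hgb
      simp [hb, Ne.symm hab, Finset.mem_insert]
    · simp only [if_neg hga, if_neg hgb, add_zero, Nat.sub_zero]
      congr 1
      simp [Finset.mem_insert, Finset.mem_erase, hga, hgb]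

lemma exists_family [NeZero n] (r : ℕ) (hr : r ≤ n) :
    ∃ S : Fin n → Finset (Fin n), (∀ i, (S i).card = r) ∧
      (∀ g, (univ.filter fun i => g ∈ S i).card = r) := by
  classical
  refine ⟨fun i => univ.filter fun g => (g - i).val < r, ?_, ?_⟩
  all_goals
    have hbase : (univ.filter fun h : Fin n => h.val < r).card = r := by
      have himg : (univ.filter fun h : Fin n => h.val < r).image Fin.val
          = Finset.range r := by
        ext m
        simp only [Finset.mem_image, Finset.mem_filter, Finset.mem_univ, true_and,
          Finset.mem_range]
        constructor
        · rintro ⟨h, hlt, rfl⟩; exact hlt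
        · intro hm
          exact ⟨⟨m, lt_of_lt_of_le hm hr⟩, hm, rfl⟩
      have := congrArg Finset.card himg
      rwa [Finset.card_image_of_injective _ Fin.val_injective, Finset.card_range] at this
  · intro i
    dsimp only
    have himg : (univ.filter fun h : Fin n => h.val < r).image (fun h => h + i)
        = univ.filter fun g => (g - i).val < r := by
      ext g
      simp only [Finset.mem_image, Finset.mem_filter, Finset.mem_univ, true_and]
      constructor
      · rintro ⟨h, hlt, rfl⟩
        simpa using hlt
      · intro hlt
        exact ⟨g - i, hlt, by abel⟩
    rw [← himg, Finset.card_image_of_injective _ (add_left_injective i), hbase]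
  · intro g
    simp only [Finset.mem_filter, Finset.mem_univ, true_and]
    have himg : (univ.filter fun h : Fin n => h.val < r).image (fun h => g - h)
        = univ.filter fun i => ((g - i)).val < r := by
      ext i
      simp only [Finset.mem_image, Finset.mem_filter, Finset.mem_univ, true_and]
      constructor
      · rintro ⟨h, hlt, rfl⟩
        simpa using hlt
      · intro hlt
        exact ⟨g - i, hlt, by abel⟩
    rw [← himg, Finset.card_image_of_injective _ (fun x y hxy => by
      have : g - x = g - y := hxy
      have := congrArg (fun z => g - z) this
      simpa using this), hbase]

end


/-- For identical (arbitrary real-valued, i.e. mixed) valuations, a swapEF repeated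
matching exists. -/
theorem stmt12 (n T : ℕ) (v : Fin n → ℕ → ℝ) :
    ∃ A : Fin T → Fin n ≃ Fin n, swapEF (fun _ : Fin n => v) A := by
  classical
  rcases Nat.eq_zero_or_pos n with hn | hn
  · subst hn
    exact ⟨fun _ => Equiv.refl _, fun i _ => i.elim0⟩
  have : NeZero n := ⟨hn.ne'⟩
  have hrn : T % n < n := Nat.mod_lt _ hn
  obtain ⟨S0, hS0a, hS0b⟩ := exists_family (n := n) (T % n) hrn.le
  have hne : (univ.filter fun S : Fin n → Finset (Fin n) =>
      (∀ i, (S i).card = T % n) ∧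
      (∀ g, (univ.filter fun i => g ∈ S i).card = T % n)).Nonempty :=
    ⟨S0, Finset.mem_filter.mpr ⟨Finset.mem_univ _, hS0a, hS0b⟩⟩
  obtain ⟨S, hSmem, hSmin⟩ := Finset.exists_min_image _
    (fun S : Fin n → Finset (Fin n) =>
      ∑ k : Fin n, (∑ g ∈ S k, v g (T / n + 1))^2) hne
  rw [Finset.mem_filter] at hSmem
  obtain ⟨-, hScard, hScov⟩ := hSmem
  obtain ⟨σ, hσ⟩ := decomp n (T % n) S hScard hScov
  refine ⟨buildA n T σ, ?_⟩
  have hmult : ∀ i g, mult (buildA n T σ) i g = T / n + (if g ∈ S i then 1 else 0) :=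
    fun i g => mult_buildA n T S σ hσ i g
  have hmf : ∀ i, mult (buildA n T σ) i = fun g => T / n + (if g ∈ S i then 1 else 0) :=
    fun i => funext (hmult i)
  have hval : ∀ i, bundleValue v (mult (buildA n T σ) i)
      = (∑ g : Fin n, ∑ t ∈ Finset.range (T / n), v g (t+1))
          + ∑ g ∈ S i, v g (T / n + 1) := by
    intro i; rw [hmf i, bundleValue_family]
  intro i j
  dsimp only
  by_cases hWij : ∑ g ∈ S j, v g (T / n + 1) ≤ ∑ g ∈ S i, v g (T / n + 1)
  · left
    rw [ge_iff_le, hval i, hval j]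
    linarith
  right
  push_neg at hWij
  have hij : i ≠ j := fun h => by rw [h] at hWij; exact lt_irrefl _ hWij
  have hDeq : ∑ g ∈ S j, v g (T / n + 1) - ∑ g ∈ S i, v g (T / n + 1)
      = (∑ g ∈ S j \ S i, v g (T / n + 1)) - ∑ g ∈ S i \ S j, v g (T / n + 1) := by
    have h1 := Finset.sum_inter_add_sum_sdiff (S j) (S i) (fun g => v g (T / n + 1))
    have h2 := Finset.sum_inter_add_sum_sdiff (S i) (S j) (fun g => v g (T / n + 1))
    rw [Finset.inter_comm] at h2
    linarith
  have hcards : (S i \ S j).card = (S j \ S i).card :=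
    Finset.card_sdiff_comm ((hScard i).trans (hScard j).symm)
  have hPne : (S j \ S i).Nonempty := by
    rw [Finset.nonempty_iff_ne_empty]
    intro h
    have hM : S i \ S j = ∅ := Finset.card_eq_zero.mp (by rw [hcards, h, Finset.card_empty])
    rw [h, hM] at hDeq
    simp at hDeq
    linarith
  have hMne : (S i \ S j).Nonempty := by
    rw [← Finset.card_pos, hcards, Finset.card_pos]; exact hPne
  obtain ⟨b, hbP, hbmax⟩ := Finset.exists_max_image (S j \ S i) (fun g => v g (T / n + 1)) hPne
  obtain ⟨a, haM, hamin⟩ := Finset.exists_min_image (S i \ S j) (fun g => v g (T / n + 1)) hMne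
  have haSi : a ∈ S i := (Finset.mem_sdiff.mp haM).1
  have haSj : a ∉ S j := (Finset.mem_sdiff.mp haM).2
  have hbSj : b ∈ S j := (Finset.mem_sdiff.mp hbP).1
  have hbSi : b ∉ S i := (Finset.mem_sdiff.mp hbP).2
  have hab : a ≠ b := fun h => hbSi (h ▸ haSi)
  have htpos : 0 < v b (T / n + 1) - v a (T / n + 1) := by
    have h1 : ∑ g ∈ S j \ S i, v g (T / n + 1)
        ≤ (S j \ S i).card • v b (T / n + 1) :=
      Finset.sum_le_card_nsmul _ _ _ (fun x hx => hbmax x hx)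
    have h2 : (S i \ S j).card • v a (T / n + 1) ≤ ∑ g ∈ S i \ S j, v g (T / n + 1) :=
      Finset.card_nsmul_le_sum _ _ _ (fun x hx => hamin x hx)
    rw [hcards] at h2
    rw [nsmul_eq_mul] at h1 h2
    by_contra hle
    push_neg at hle
    have hcnn : (0:ℝ) ≤ ((S j \ S i).card : ℝ) := Nat.cast_nonneg _
    nlinarith
  -- exchange family
  have hrpos : 0 < T % n := by
    have := hScard j
    have : (S j).Nonempty := ⟨b, hbSj⟩
    have := Finset.card_pos.mpr this
    omega
  set Si' := insert b ((S i).erase a) with hSi'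
  set Sj' := insert a ((S j).erase b) with hSj'
  set S' := Function.update (Function.update S i Si') j Sj' with hS'def
  have hS'i : S' i = Si' := by
    rw [hS'def, Function.update_of_ne hij, Function.update_self]
  have hS'j : S' j = Sj' := by rw [hS'def, Function.update_self]
  have hS'k : ∀ k, k ≠ i → k ≠ j → S' k = S k := fun k hki hkj => by
    rw [hS'def, Function.update_of_ne hkj, Function.update_of_ne hki]
  have hcard_i' : Si'.card = T % n := by
    rw [hSi', Finset.card_insert_of_notMem (fun hmem => hbSi (Finset.mem_of_mem_erase hmem)),
      Finset.card_erase_of_mem haSi, hScard i]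
    omega
  have hcard_j' : Sj'.card = T % n := by
    rw [hSj', Finset.card_insert_of_notMem (fun hmem => haSj (Finset.mem_of_mem_erase hmem)),
      Finset.card_erase_of_mem hbSj, hScard j]
    omega
  have hsplit : ∀ {β : Type} [AddCommMonoid β] (F : Fin n → β),
      ∑ k : Fin n, F k = F j + (F i + ∑ k ∈ (univ.erase j).erase i, F k) := by
    intro β _ F
    rw [← Finset.add_sum_erase _ F (Finset.mem_univ j)]
    congr 1
    rw [← Finset.add_sum_erase _ F (Finset.mem_erase.mpr ⟨hij, Finset.mem_univ i⟩)]
  have haSj' : a ∈ Sj' := by rw [hSj']; exact Finset.mem_insert_self _ _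
  have haSi' : a ∉ Si' := by
    rw [hSi']
    simp [Finset.mem_insert, Finset.mem_erase, hab]
  have hbSi' : b ∈ Si' := by rw [hSi']; exact Finset.mem_insert_self _ _
  have hbSj' : b ∉ Sj' := by
    rw [hSj']
    simp [Finset.mem_insert, Finset.mem_erase, Ne.symm hab]
  have hgsum : ∀ g, ((if g ∈ Sj' then 1 else 0) + (if g ∈ Si' then 1 else 0) : ℕ)
      = (if g ∈ S j then 1 else 0) + (if g ∈ S i then 1 else 0) := by
    intro g
    by_cases hga : g = a
    · rw [hga]
      simp [haSj', haSi', haSi, haSj]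
    · by_cases hgb : g = b
      · rw [hgb]
        simp [hbSi', hbSj', hbSj, hbSi]
      · have h1 : g ∈ Sj' ↔ g ∈ S j := by
          rw [hSj']
          simp [Finset.mem_insert, Finset.mem_erase, hga, hgb]
        have h2 : g ∈ Si' ↔ g ∈ S i := by
          rw [hSi']
          simp [Finset.mem_insert, Finset.mem_erase, hga, hgb]
        rw [if_congr h1 rfl rfl, if_congr h2 rfl rfl]
  have hvalid' : (∀ k, (S' k).card = T % n) ∧
      (∀ g, (univ.filter fun k => g ∈ S' k).card = T % n) := by
    constructor
    · intro k
      by_cases hki : k = i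
      · rw [hki, hS'i]; exact hcard_i'
      · by_cases hkj : k = j
        · rw [hkj, hS'j]; exact hcard_j'
        · rw [hS'k k hki hkj]; exact hScard k
    · intro g
      have e1 : (univ.filter fun k => g ∈ S' k).card
          = ∑ k : Fin n, (if g ∈ S' k then 1 else 0) := Finset.card_filter _ _
      have e2 : (univ.filter fun k => g ∈ S k).card
          = ∑ k : Fin n, (if g ∈ S k then 1 else 0) := Finset.card_filter _ _
      rw [e1, hsplit (fun k => if g ∈ S' k then 1 else 0)]
      have erest : ∑ k ∈ (univ.erase j).erase i, (if g ∈ S' k then 1 else 0)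
          = ∑ k ∈ (univ.erase j).erase i, (if g ∈ S k then 1 else 0) := by
        refine Finset.sum_congr rfl fun k hk => ?_
        rw [Finset.mem_erase, Finset.mem_erase] at hk
        rw [hS'k k hk.1 hk.2.1]
      rw [hS'i, hS'j, erest, ← add_assoc, hgsum g, add_assoc,
        ← hsplit (fun k => if g ∈ S k then 1 else 0), ← e2, hScov g]
  have hΦ : ∑ k : Fin n, (∑ g ∈ S k, v g (T / n + 1))^2
      ≤ ∑ k : Fin n, (∑ g ∈ S' k, v g (T / n + 1))^2 :=
    hSmin S' (Finset.mem_filter.mpr ⟨Finset.mem_univ _, hvalid'⟩)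
  have hWi' : ∑ g ∈ Si', v g (T / n + 1)
      = ∑ g ∈ S i, v g (T / n + 1) + (v b (T / n + 1) - v a (T / n + 1)) := by
    rw [hSi', Finset.sum_insert (fun hmem => hbSi (Finset.mem_of_mem_erase hmem)),
      Finset.sum_erase_eq_sub haSi]
    ring
  have hWj' : ∑ g ∈ Sj', v g (T / n + 1)
      = ∑ g ∈ S j, v g (T / n + 1) - (v b (T / n + 1) - v a (T / n + 1)) := by
    rw [hSj', Finset.sum_insert (fun hmem => haSj (Finset.mem_of_mem_erase hmem)),
      Finset.sum_erase_eq_sub hbSj]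
    ring
  have htD : ∑ g ∈ S j, v g (T / n + 1) - ∑ g ∈ S i, v g (T / n + 1)
      ≤ v b (T / n + 1) - v a (T / n + 1) := by
    rw [hsplit (fun k => (∑ g ∈ S k, v g (T / n + 1))^2),
      hsplit (fun k => (∑ g ∈ S' k, v g (T / n + 1))^2)] at hΦ
    have hrest : ∑ k ∈ (univ.erase j).erase i, (∑ g ∈ S' k, v g (T / n + 1))^2
        = ∑ k ∈ (univ.erase j).erase i, (∑ g ∈ S k, v g (T / n + 1))^2 := by
      refine Finset.sum_congr rfl fun k hk => ?_
      rw [Finset.mem_erase, Finset.mem_erase] at hk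
      rw [hS'k k hk.1 hk.2.1]
    rw [hrest, hS'i, hS'j, hWi', hWj'] at hΦ
    nlinarith [htpos, hΦ]
  -- conclusion
  refine ⟨a, b, ?_, ?_, ?_⟩
  · rw [hmult i a, if_pos haSi]; exact Nat.le_add_left 1 (T / n)
  · rw [hmult j b, if_pos hbSj]; exact Nat.le_add_left 1 (T / n)
  · have hswi : swapBundle (mult (buildA n T σ) i) a b
        = fun g => T / n + if g ∈ Si' then 1 else 0 := by
      rw [hSi']
      exact swap_family (T / n) (S i) a b haSi hbSi _ (hmult i)
    have hswj : swapBundle (mult (buildA n T σ) j) b a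
        = fun g => T / n + if g ∈ Sj' then 1 else 0 := by
      rw [hSj']
      exact swap_family (T / n) (S j) b a hbSj haSj _ (hmult j)
    rw [hswi, hswj, bundleValue_family, bundleValue_family, ge_iff_le, hWi', hWj']
    linarith
end
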